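/- Both the supertrace and the trace transfer matrices of the inhomogeneous fundamental gl(M|N) chain generate commutative families: for all u, v ∈ ℂ, [st(u), st(v)] = 0 and [t(u), t(v)] = 0 in End(H). -/

import Mathlib

open scoped BigOperators

noncomputable section

namespace SuperSpin

/-- The ℤ₂-grading on `Fin n` (0-indexed): grade `0` for the first `M` indices,
grade `1` for the remaining ones.  `gr M i` is the grade of the (paper, 1-indexed)
index `i+1`. -/
def gr (M : ℕ) {n : ℕ} (i : Fin n) : ℕ := if (i : ℕ) < M then 0 else 1

/-- `End(V ⊗ V)` for `V = ℂⁿ`, as matrices indexed by pairs. -/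
abbrev E2 (n : ℕ) := Matrix (Fin n × Fin n) (Fin n × Fin n) ℂ

/-- The graded permutation operator `P (e_c ⊗ e_d) = (-1)^{[c][d]} e_d ⊗ e_c`. -/
def Pm (M n : ℕ) : E2 n :=
  Matrix.of fun p q =>
    if p.1 = q.2 ∧ p.2 = q.1 then ((-1 : ℂ) ^ (gr M q.1 * gr M q.2)) else 0

/-- The R-matrix `R(u) = u·id - hb·P`. -/
def Rm (M n : ℕ) (hb u : ℂ) : E2 n := u • (1 : E2 n) - hb • Pm M n

/-- The operator `Q (e_c ⊗ e_d) = δ_{cd} (-1)^{[d]} ∑_a e_a ⊗ e_a`. -/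
def Qm (M n : ℕ) : E2 n :=
  Matrix.of fun p q => if q.1 = q.2 ∧ p.1 = p.2 then ((-1 : ℂ) ^ (gr M q.2)) else 0

/-- Graded partial transposition in the second tensor factor. -/
def pt2 (M n : ℕ) (X : E2 n) : E2 n :=
  Matrix.of fun p q =>
    ((-1 : ℂ) ^ (gr M p.2 * gr M q.2 + gr M q.2)) * X (p.1, q.2) (q.1, p.2)

/-- Graded transposition of an `n × n` matrix: `(Aᵗ)_{ij} = (-1)^{[i][j]+[j]} A_{ji}`. -/
def gTr (M : ℕ) {n : ℕ} (A : Matrix (Fin n) (Fin n) ℂ) : Matrix (Fin n) (Fin n) ℂ :=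
  Matrix.of fun i j => ((-1 : ℂ) ^ (gr M i * gr M j + gr M j)) * A j i

/-- `A ⊗ id` acting on `V ⊗ V`. -/
def m1 {n : ℕ} (A : Matrix (Fin n) (Fin n) ℂ) : E2 n :=
  Matrix.of fun p q => A p.1 q.1 * (if p.2 = q.2 then 1 else 0)

/-- `id ⊗ A` acting on `V ⊗ V`. -/
def m2 {n : ℕ} (A : Matrix (Fin n) (Fin n) ℂ) : E2 n :=
  Matrix.of fun p q => (if p.1 = q.1 then 1 else 0) * A p.2 q.2

/-- `R₂₁(x) = P ∘ R(x) ∘ P`. -/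
def R21 (M n : ℕ) (hb u : ℂ) : E2 n := Pm M n * Rm M n hb u * Pm M n

/-- The graded reflection equation for a matrix-valued function `K`. -/
def GRE (M n : ℕ) (hb : ℂ) (K : ℂ → Matrix (Fin n) (Fin n) ℂ) : Prop :=
  ∀ u v : ℂ,
    Rm M n hb (u - v) * m1 (K u) * R21 M n hb (u + v) * m2 (K v)
      = m2 (K v) * Rm M n hb (u + v) * m1 (K u) * R21 M n hb (u - v)

/-- `End(V^{⊗m})`, with basis indexed by functions `Fin m → Fin n`. -/
abbrev Ten (n m : ℕ) := Matrix (Fin m → Fin n) (Fin m → Fin n) ℂ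

/-- The Koszul embedding of `X ∈ End(V ⊗ V)` acting on the factors `i < j` of
`V^{⊗ m}` (identity on the other factors, with the graded crossing signs produced
by conjugation with the adjacent graded permutation operators). -/
def kEmb (M n m : ℕ) (i j : Fin m) (X : E2 n) : Ten n m :=
  Matrix.of fun f g =>
    (if ∀ l, l ≠ i → l ≠ j → f l = g l then (1 : ℂ) else 0)
      * X (f i, f j) (g i, g j)
      * (-1 : ℂ) ^ ((gr M (f j) + gr M (g j)) *
          ∑ l ∈ Finset.univ.filter (fun l => i < l ∧ l < j), gr M (g l))

/-- The monodromy matrix `𝒯(u) = R_{1,2}(u-a₁) ⋯ R_{1,L+1}(u-a_L)` of the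
inhomogeneous fundamental chain, acting on `V ⊗ H = V^{⊗(L+1)}` (auxiliary space
in position `0`). -/
def Tmono (M n L : ℕ) (hb : ℂ) (a : Fin L → ℂ) (u : ℂ) : Ten n (L + 1) :=
  (List.ofFn fun k : Fin L => kEmb M n (L + 1) 0 k.succ (Rm M n hb (u - a k))).prod

/-- The block entry `X_{ab} ∈ End(H)` of an operator `X` on `V ⊗ H`. -/
def blk {n L : ℕ} (X : Ten n (L + 1)) (a b : Fin n) : Ten n L :=
  Matrix.of fun f g => X (Fin.cons a f) (Fin.cons b g)

/-- Supertrace transfer matrix `st(u) = ∑ (-1)^{[a]} 𝒯_{aa}(u)`. -/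
def stm (M n L : ℕ) (hb : ℂ) (a : Fin L → ℂ) (u : ℂ) : Ten n L :=
  ∑ i : Fin n, ((-1 : ℂ) ^ gr M i) • blk (Tmono M n L hb a u) i i

/-- Trace transfer matrix `t(u) = ∑ 𝒯_{aa}(u)`. -/
def tm (M n L : ℕ) (hb : ℂ) (a : Fin L → ℂ) (u : ℂ) : Ten n L :=
  ∑ i : Fin n, blk (Tmono M n L hb a u) i i

/-- The pseudovacuum `v⁺ = e₁ ⊗ ⋯ ⊗ e₁`. -/
def vplus (n L : ℕ) : (Fin L → Fin n) → ℂ :=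
  fun f => if ∀ l, (f l : ℕ) = 0 then 1 else 0

/-- The pseudovacuum weights `λ_j(w)` (paper index `j ≥ 1`):
`λ₁(w) = ∏ (w - a_m - hb)`, `λ_j(w) = ∏ (w - a_m)` for `j ≥ 2`. -/
def lamP (L : ℕ) (hb : ℂ) (a : Fin L → ℂ) (j : ℕ) (w : ℂ) : ℂ :=
  if j = 1 then ∏ m, (w - a m - hb) else ∏ m, (w - a m)

/-- `c_m = ∑_{l=1}^m (-1)^{[l]}` (so `c_0 = 0`). -/
def cP (M : ℕ) (m : ℕ) : ℂ := ∑ l ∈ Finset.range m, (if l < M then (1 : ℂ) else -1)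

/-- `λ'_k(w) = ∏_{m=1}^{k-1} λ_m(w + hb c_m) / ∏_{m=1}^{k} λ_m(w + hb c_{m-1})`
(paper index `k ≥ 1`). -/
def lamPr (M L : ℕ) (hb : ℂ) (a : Fin L → ℂ) (k : ℕ) (w : ℂ) : ℂ :=
  (∏ m ∈ Finset.Icc 1 (k - 1), lamP L hb a m (w + hb * cP M m)) /
    (∏ m ∈ Finset.Icc 1 k, lamP L hb a m (w + hb * cP M (m - 1)))

/-- The global generators `Δ(E_{ab}) = ∑_k E_{ab}^{(k)}` on `H = V^{⊗L}`. -/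
def Delta (M n L : ℕ) (a b : Fin n) : Ten n L :=
  ∑ k : Fin L, Matrix.of fun f g =>
    if f k = a ∧ g k = b ∧ ∀ l, l ≠ k → f l = g l then
      (-1 : ℂ) ^ ((gr M a + gr M b) *
        ∑ l ∈ Finset.univ.filter (fun l => l < k), gr M (g l))
    else 0

/-- The diagonal entry (at paper index `j`, `1 ≤ j ≤ n`) of the diagonal boundary
matrix with parameter `ξ` and blocks determined by `L₁ ≤ L₂`. -/
def kdval (ξ : ℂ) (L₁ L₂ : ℕ) (j : ℕ) (u : ℂ) : ℂ :=
  if L₁ < j ∧ j ≤ L₂ then u + ξ else ξ - u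

/-- The diagonal boundary matrix `K(u)`. -/
def Kdiag (n : ℕ) (ξ : ℂ) (L₁ L₂ : ℕ) (u : ℂ) : Matrix (Fin n) (Fin n) ℂ :=
  Matrix.diagonal fun j => kdval ξ L₁ L₂ ((j : ℕ) + 1) u

/-- An `n × n` matrix acting on the auxiliary (first) factor of `V^{⊗(L+1)}`. -/
def onAux {n L : ℕ} (A : Matrix (Fin n) (Fin n) ℂ) : Ten n (L + 1) :=
  Matrix.of fun f g => A (f 0) (g 0) * (if ∀ l, l ≠ 0 → f l = g l then 1 else 0)

/-- The double-row monodromy matrix `ℬ(u) = 𝒯(u) (K(u) ⊗ id_H) 𝒯(-u)⁻¹`. -/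
def Bmono (M n L : ℕ) (hb : ℂ) (a : Fin L → ℂ) (ξ : ℂ) (L₁ L₂ : ℕ) (u : ℂ) :
    Ten n (L + 1) :=
  Tmono M n L hb a u * onAux (Kdiag n ξ L₁ L₂ u) * (Tmono M n L hb a (-u))⁻¹

/-- The open-chain transfer matrix `b(u) = ∑ (-1)^{[a]} K⁺_{aa}(u) ℬ_{aa}(u)`. -/
def bop (M n L : ℕ) (hb : ℂ) (a : Fin L → ℂ) (ξ : ℂ) (L₁ L₂ : ℕ)
    (ξ' : ℂ) (L₁' L₂' : ℕ) (u : ℂ) : Ten n L :=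
  ∑ i : Fin n,
    (((-1 : ℂ) ^ gr M i) * Kdiag n ξ' L₁' L₂' u i i) •
      blk (Bmono M n L hb a ξ L₁ L₂ u) i i

/-- The functions `g_k(u)` of the open-chain pseudovacuum (paper index `k ≥ 1`). -/
def gP (M : ℕ) (hb ξ : ℂ) (L₁ L₂ : ℕ) (k : ℕ) (u : ℂ) : ℂ :=
  if k ≤ L₁ then ξ - u
  else if k ≤ L₂ then ξ + u - hb * cP M L₁
  else ξ - u - hb * (cP M L₁ - cP M L₂)

/-- The functions `a_k(u)` of the open-chain pseudovacuum (paper index `k ≥ 1`). -/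
def aP (M L : ℕ) (hb : ℂ) (a : Fin L → ℂ) (k : ℕ) (u : ℂ) : ℂ :=
  (if k ≤ M then (1 : ℂ) else -1) * hb *
    (2 * u * lamP L hb a k u * lamPr M L hb a k (-u)) /
    ((2 * u - hb * cP M k) * (2 * u - hb * cP M (k - 1)))

namespace S7

open Matrix Finset

variable {M n m L : ℕ}

/-- Koszul window sum. -/
def W (M : ℕ) {n m : ℕ} (i j : Fin m) (g : Fin m → Fin n) : ℕ :=
  ∑ l ∈ Finset.univ.filter (fun l => i < l ∧ l < j), gr M (g l)

lemma neg_one_pow_mod2 (a : ℕ) : ((-1:ℂ))^a = (-1)^(a % 2) := by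
  conv_lhs => rw [← Nat.div_add_mod a 2]
  rw [pow_add, pow_mul, neg_one_sq, one_pow, one_mul]

lemma sgn_congr {a b : ℕ} (h : (a : ZMod 2) = (b : ZMod 2)) :
    ((-1 : ℂ) ^ a) = (-1) ^ b := by
  rw [ZMod.natCast_eq_natCast_iff] at h
  rw [neg_one_pow_mod2 a, neg_one_pow_mod2 b, h]

lemma kEmb_apply (i j : Fin m) (X : E2 n) (f g : Fin m → Fin n) :
    kEmb M n m i j X f g =
      (if ∀ l, l ≠ i → l ≠ j → f l = g l then (1 : ℂ) else 0)
        * X (f i, f j) (g i, g j)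
        * (-1 : ℂ) ^ ((gr M (f j) + gr M (g j)) * W M i j g) := rfl

lemma Pm_apply (p q : Fin n × Fin n) :
    Pm M n p q = if p.1 = q.2 ∧ p.2 = q.1 then ((-1 : ℂ) ^ (gr M q.1 * gr M q.2)) else 0 := rfl

lemma swap_cond {i j : Fin m} (hij : i ≠ j) (f g : Fin m → Fin n) :
    f = g ∘ (Equiv.swap i j) ↔
      ((∀ l, l ≠ i → l ≠ j → f l = g l) ∧ f i = g j ∧ f j = g i) := by
  constructor
  · rintro rfl
    refine ⟨fun l hli hlj => ?_, ?_, ?_⟩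
    · simp [Equiv.swap_apply_of_ne_of_ne hli hlj]
    · simp [Equiv.swap_apply_left]
    · simp [Equiv.swap_apply_right]
  · rintro ⟨h1, h2, h3⟩
    funext l
    rcases eq_or_ne l i with rfl | hli
    · simpa [Equiv.swap_apply_left] using h2
    rcases eq_or_ne l j with rfl | hlj
    · simpa [Equiv.swap_apply_right] using h3
    · simpa [Equiv.swap_apply_of_ne_of_ne hli hlj] using h1 l hli hlj

lemma kEmb_Pm_apply {i j : Fin m} (hij : i ≠ j) (f g : Fin m → Fin n) :
    kEmb M n m i j (Pm M n) f g =
      if f = g ∘ (Equiv.swap i j) then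
        (-1:ℂ) ^ (gr M (g i) * gr M (g j) + (gr M (g i) + gr M (g j)) * W M i j g)
      else 0 := by
  rw [kEmb_apply, Pm_apply]
  by_cases hf : f = g ∘ (Equiv.swap i j)
  · rw [if_pos hf]
    obtain ⟨h1, h2, h3⟩ := (swap_cond hij f g).1 hf
    rw [if_pos h1, if_pos ⟨h2, h3⟩, h3, one_mul, ← pow_add]
  · rw [if_neg hf]
    by_cases h1 : ∀ l, l ≠ i → l ≠ j → f l = g l
    · by_cases h2 : f i = g j ∧ f j = g i
      · exact absurd ((swap_cond hij f g).2 ⟨h1, h2.1, h2.2⟩) hf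
      · rw [if_neg h2]; ring
    · rw [if_neg h1]; ring

lemma mulPP {i j k l : Fin m} (hij : i ≠ j) (hkl : k ≠ l) (f g : Fin m → Fin n) :
    (kEmb M n m i j (Pm M n) * kEmb M n m k l (Pm M n)) f g =
      if f = g ∘ (⇑(Equiv.swap k l) ∘ ⇑(Equiv.swap i j)) then
        (-1:ℂ) ^ (gr M (g (Equiv.swap k l i)) * gr M (g (Equiv.swap k l j))
           + (gr M (g (Equiv.swap k l i)) + gr M (g (Equiv.swap k l j)))
              * W M i j (g ∘ Equiv.swap k l)
           + (gr M (g k) * gr M (g l) + (gr M (g k) + gr M (g l)) * W M k l g))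
       else 0 := by
  rw [Matrix.mul_apply]
  rw [Finset.sum_eq_single (g ∘ ⇑(Equiv.swap k l))]
  · rw [kEmb_Pm_apply hij, kEmb_Pm_apply hkl, if_pos rfl]
    have hcomp : f = (g ∘ ⇑(Equiv.swap k l)) ∘ ⇑(Equiv.swap i j) ↔
        f = g ∘ (⇑(Equiv.swap k l) ∘ ⇑(Equiv.swap i j)) := Iff.rfl
    by_cases hf : f = g ∘ (⇑(Equiv.swap k l) ∘ ⇑(Equiv.swap i j))
    · rw [if_pos (hcomp.2 hf), if_pos hf, ← pow_add]
      rfl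
    · rw [if_neg (fun h => hf (hcomp.1 h)), zero_mul, if_neg hf]
  · intro H _ hH
    rw [kEmb_Pm_apply hkl, if_neg ?_, mul_zero]
    intro h; exact hH h
  · intro h; exact absurd (Finset.mem_univ _) h

end S7
namespace S7

open Matrix Finset

variable {M n m L : ℕ}

lemma W01 (g : Fin (m+2) → Fin n) : W M (0 : Fin (m+2)) 1 g = 0 := by
  unfold W
  rw [show (Finset.univ.filter fun l => (0:Fin (m+2)) < l ∧ l < 1) = ∅ from ?_]
  · simp
  · ext l
    simp only [mem_filter, mem_univ, true_and, Finset.notMem_empty, iff_false, not_and]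
    intro h1 h2
    rw [Fin.lt_def] at h1 h2
    simp only [Fin.val_zero, Fin.val_one] at h1 h2
    omega

lemma W_zero_eq {k : Fin (m+2)} (hk : (1:Fin (m+2)) < k) (g : Fin (m+2) → Fin n) :
    W M 0 k g = gr M (g 1) + W M 1 k g := by
  have hk' : 1 < k.val := by rw [Fin.lt_def] at hk; simpa using hk
  have hset : (Finset.univ.filter fun l => (0:Fin (m+2)) < l ∧ l < k)
      = insert 1 (Finset.univ.filter fun l => (1:Fin (m+2)) < l ∧ l < k) := by
    ext l
    simp only [mem_filter, mem_univ, true_and, Finset.mem_insert, Fin.lt_def, Fin.val_zero,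
      Fin.val_one, Fin.ext_iff]
    omega
  have hmem : (1 : Fin (m+2)) ∉ (Finset.univ.filter fun l => (1:Fin (m+2)) < l ∧ l < k) := by
    simp
  unfold W
  rw [hset, Finset.sum_insert hmem]

lemma W_comp {i j : Fin m} (σ : Equiv.Perm (Fin m))
    (hσ : ∀ l, i < l → l < j → σ l = l) (g : Fin m → Fin n) :
    W M i j (g ∘ σ) = W M i j g := by
  unfold W
  refine Finset.sum_congr rfl fun l hl => ?_
  simp only [mem_filter, mem_univ, true_and] at hl
  simp [Function.comp, hσ l hl.1 hl.2]

lemma W_swap_mem {i j a b : Fin m} (hbi : i < b) (hbj : b < j) (ha : ¬(i < a ∧ a < j))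
    (hab : a ≠ b) (g : Fin m → Fin n) :
    W M i j (g ∘ Equiv.swap a b) + gr M (g b) = W M i j g + gr M (g a) := by
  classical
  have hbmem : b ∈ Finset.univ.filter (fun l => i < l ∧ l < j) := by
    simp [hbi, hbj]
  unfold W
  rw [← Finset.sum_erase_add _ _ hbmem, ← Finset.sum_erase_add _ (fun l => gr M (g l)) hbmem]
  have h1 : ∀ l ∈ (Finset.univ.filter (fun l => i < l ∧ l < j)).erase b,
      gr M ((g ∘ Equiv.swap a b) l) = gr M (g l) := by
    intro l hl
    simp only [Finset.mem_erase, mem_filter, mem_univ, true_and] at hl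
    have hla : l ≠ a := fun h => ha (h ▸ hl.2)
    simp [Function.comp, Equiv.swap_apply_of_ne_of_ne hla hl.1]
  rw [Finset.sum_congr rfl h1]
  simp only [Function.comp, Equiv.swap_apply_right]
  ring

lemma W_swap_both {i j a b : Fin m} (hai : i < a) (haj : a < j) (hbi : i < b) (hbj : b < j)
    (g : Fin m → Fin n) :
    W M i j (g ∘ Equiv.swap a b) = W M i j g := by
  classical
  unfold W
  refine Finset.sum_nbij' (fun l => Equiv.swap a b l) (fun l => Equiv.swap a b l) ?_ ?_ ?_ ?_ ?_
  · intro l hl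
    simp only [mem_filter, mem_univ, true_and] at hl ⊢
    rcases eq_or_ne l a with rfl | hla
    · simpa [Equiv.swap_apply_left] using ⟨hbi, hbj⟩
    rcases eq_or_ne l b with rfl | hlb
    · simpa [Equiv.swap_apply_right] using ⟨hai, haj⟩
    · simpa [Equiv.swap_apply_of_ne_of_ne hla hlb] using hl
  · intro l hl
    simp only [mem_filter, mem_univ, true_and] at hl ⊢
    rcases eq_or_ne l a with rfl | hla
    · simpa [Equiv.swap_apply_left] using ⟨hbi, hbj⟩
    rcases eq_or_ne l b with rfl | hlb
    · simpa [Equiv.swap_apply_right] using ⟨hai, haj⟩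
    · simpa [Equiv.swap_apply_of_ne_of_ne hla hlb] using hl
  · intro l _; simp
  · intro l _; simp
  · intro l _; simp [Function.comp]

end S7
namespace S7

open Matrix Finset Equiv

variable {M n m L : ℕ}

lemma fin_zero_ne_one : (0 : Fin (m+2)) ≠ 1 := by
  simp [Fin.ext_iff]

section PermId

variable (k j : Fin (m+2))

lemma q1 (hk : (1:Fin (m+2)) < k) :
    Equiv.swap (1:Fin (m+2)) k * Equiv.swap 0 k = Equiv.swap 0 k * Equiv.swap 0 1 := by
  have hk0 : k ≠ 0 := by rintro rfl; exact absurd hk (by simp [Fin.lt_def])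
  have hk1 : k ≠ 1 := ne_of_gt hk
  have h01 : (0:Fin (m+2)) ≠ 1 := fin_zero_ne_one
  ext x
  simp only [Equiv.Perm.mul_apply, Equiv.swap_apply_def]
  split_ifs <;> simp_all

lemma q2 (hk : (1:Fin (m+2)) < k) :
    Equiv.swap (0:Fin (m+2)) 1 * Equiv.swap 1 k = Equiv.swap 0 k * Equiv.swap 0 1 := by
  have hk0 : k ≠ 0 := by rintro rfl; exact absurd hk (by simp [Fin.lt_def])
  have hk1 : k ≠ 1 := ne_of_gt hk
  have h01 : (0:Fin (m+2)) ≠ 1 := fin_zero_ne_one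
  ext x
  simp only [Equiv.Perm.mul_apply, Equiv.swap_apply_def]
  split_ifs <;> simp_all

lemma q3 (hk : (1:Fin (m+2)) < k) :
    Equiv.swap (0:Fin (m+2)) 1 * Equiv.swap 0 k = Equiv.swap 1 k * Equiv.swap 0 1 := by
  have hk0 : k ≠ 0 := by rintro rfl; exact absurd hk (by simp [Fin.lt_def])
  have hk1 : k ≠ 1 := ne_of_gt hk
  have h01 : (0:Fin (m+2)) ≠ 1 := fin_zero_ne_one
  ext x
  simp only [Equiv.Perm.mul_apply, Equiv.swap_apply_def]
  split_ifs <;> simp_all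

lemma q4 (hk : (1:Fin (m+2)) < k) :
    Equiv.swap (0:Fin (m+2)) k * Equiv.swap 1 k = Equiv.swap 1 k * Equiv.swap 0 1 := by
  have hk0 : k ≠ 0 := by rintro rfl; exact absurd hk (by simp [Fin.lt_def])
  have hk1 : k ≠ 1 := ne_of_gt hk
  have h01 : (0:Fin (m+2)) ≠ 1 := fin_zero_ne_one
  ext x
  simp only [Equiv.Perm.mul_apply, Equiv.swap_apply_def]
  split_ifs <;> simp_all

lemma q5 (hj : (1:Fin (m+2)) < j) (hk : (1:Fin (m+2)) < k) (hjk : j ≠ k) :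
    Equiv.swap (1:Fin (m+2)) k * Equiv.swap 0 j = Equiv.swap 0 j * Equiv.swap 1 k := by
  have hk0 : k ≠ 0 := by rintro rfl; exact absurd hk (by simp [Fin.lt_def])
  have hk1 : k ≠ 1 := ne_of_gt hk
  have hj0 : j ≠ 0 := by rintro rfl; exact absurd hj (by simp [Fin.lt_def])
  have hj1 : j ≠ 1 := ne_of_gt hj
  have h01 : (0:Fin (m+2)) ≠ 1 := fin_zero_ne_one
  ext x
  simp only [Equiv.Perm.mul_apply, Equiv.swap_apply_def]
  split_ifs <;> simp_all

end PermId

lemma kEmb_one {i j : Fin m} (hij : i ≠ j) : (kEmb M n m i j (1 : E2 n)) = 1 := by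
  ext f g
  rw [kEmb_apply, Matrix.one_apply, Matrix.one_apply]
  by_cases hfg : f = g
  · subst hfg
    rw [if_pos rfl, if_pos (fun l _ _ => rfl), if_pos rfl, one_mul, one_mul]
    have h0 : (((gr M (f j) + gr M (f j)) * W M i j f : ℕ) : ZMod 2) = ((0:ℕ) : ZMod 2) := by
      push_cast; ring_nf; simp [show ((2:ZMod 2)) = 0 from rfl]
    rw [sgn_congr h0, pow_zero]
  · rw [if_neg hfg]
    by_cases hc : ∀ l, l ≠ i → l ≠ j → f l = g l
    · by_cases hp : (f i, f j) = (g i, g j)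
      · exfalso
        apply hfg
        funext l
        rcases eq_or_ne l i with rfl | hli
        · exact congrArg Prod.fst hp
        rcases eq_or_ne l j with rfl | hlj
        · exact congrArg Prod.snd hp
        · exact hc l hli hlj
      · rw [if_neg hp]; ring
    · rw [if_neg hc]; ring

lemma kEmb_Rm (hb : ℂ) {i j : Fin m} (hij : i ≠ j) (u : ℂ) :
    kEmb M n m i j (Rm M n hb u)
      = u • (1 : Ten n m) - hb • kEmb M n m i j (Pm M n) := by
  ext f g
  rw [Matrix.sub_apply, Matrix.smul_apply, Matrix.smul_apply, smul_eq_mul, smul_eq_mul,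
    ← kEmb_one (M := M) (n := n) hij]
  rw [kEmb_apply, kEmb_apply, kEmb_apply]
  simp only [Rm, Matrix.sub_apply, Matrix.smul_apply, smul_eq_mul]
  ring

lemma PP_sq {i j : Fin m} (hij : i ≠ j) :
    kEmb M n m i j (Pm M n) * kEmb M n m i j (Pm M n) = 1 := by
  ext f g
  rw [mulPP hij hij, Matrix.one_apply]
  have hcmp : (⇑(Equiv.swap i j) ∘ ⇑(Equiv.swap i j)) = id := by
    rw [← Equiv.Perm.coe_mul, Equiv.swap_mul_self]; rfl
  rw [hcmp, Function.comp_id]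
  have hW : W M i j (g ∘ ⇑(Equiv.swap i j)) = W M i j g :=
    W_comp _ (fun l h1 h2 => Equiv.swap_apply_of_ne_of_ne (ne_of_gt h1) (ne_of_lt h2)) g
  rw [Equiv.swap_apply_left, Equiv.swap_apply_right, hW]
  have h0 : ((gr M (g j) * gr M (g i) + (gr M (g j) + gr M (g i)) * W M i j g
      + (gr M (g i) * gr M (g j) + (gr M (g i) + gr M (g j)) * W M i j g) : ℕ) : ZMod 2)
      = ((0:ℕ) : ZMod 2) := by
    push_cast; ring_nf; simp [show ((2:ZMod 2)) = 0 from rfl]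
  rw [sgn_congr h0, pow_zero]

end S7
namespace S7

open Matrix Finset Equiv

variable {M n m L : ℕ}

lemma zmod2_cancel {x y z : ZMod 2} (h : x + z = y) : x = y + z := by
  have h2 : z + z = 0 := by
    have h0 : (2:ZMod 2) = 0 := rfl
    calc z + z = 2 * z := by ring
    _ = 0 := by rw [h0, zero_mul]
  rw [← h, add_assoc, h2, add_zero]

section Monomial

variable {k j : Fin (m+2)}

lemma PBC (hk : (1:Fin (m+2)) < k) :
    kEmb M n (m+2) 0 k (Pm M n) * kEmb M n (m+2) 1 k (Pm M n)
      = kEmb M n (m+2) 0 1 (Pm M n) * kEmb M n (m+2) 0 k (Pm M n) := by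
  have hk0 : k ≠ 0 := by rintro rfl; exact absurd hk (by simp [Fin.lt_def])
  have hk1 : k ≠ 1 := ne_of_gt hk
  have h01 : (0:Fin (m+2)) ≠ 1 := fin_zero_ne_one
  have h0k : (0:Fin (m+2)) ≠ k := Ne.symm hk0
  have h1k : (1:Fin (m+2)) ≠ k := Ne.symm hk1
  ext f g
  rw [mulPP h0k h1k, mulPP h01 h0k]
  have hq : (⇑(Equiv.swap (1:Fin (m+2)) k) ∘ ⇑(Equiv.swap 0 k))
      = (⇑(Equiv.swap (0:Fin (m+2)) k) ∘ ⇑(Equiv.swap 0 1)) := by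
    rw [← Equiv.Perm.coe_mul, ← Equiv.Perm.coe_mul, q1 k hk]
  rw [hq]
  refine if_congr Iff.rfl ?_ rfl
  have e1 : Equiv.swap (1:Fin (m+2)) k 0 = 0 := Equiv.swap_apply_of_ne_of_ne h01 h0k
  have e2 : Equiv.swap (1:Fin (m+2)) k k = 1 := Equiv.swap_apply_right _ _
  have e3 : Equiv.swap (0:Fin (m+2)) k 0 = k := Equiv.swap_apply_left _ _
  have e4 : Equiv.swap (0:Fin (m+2)) k 1 = 1 :=
    Equiv.swap_apply_of_ne_of_ne (Ne.symm h01) h1k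
  have hW1 : W M 1 k (g ∘ ⇑(Equiv.swap 1 k)) = W M 1 k g :=
    W_comp _ (fun l hl1 hl2 => Equiv.swap_apply_of_ne_of_ne (ne_of_gt hl1) (ne_of_lt hl2)) g
  rw [e1, e2, e3, e4, W_zero_eq hk (g ∘ ⇑(Equiv.swap 1 k)), W01, W_zero_eq hk g,
    show (g ∘ ⇑(Equiv.swap (1:Fin (m+2)) k)) 1 = g k from by
      simp [Function.comp, Equiv.swap_apply_left], hW1]
  apply sgn_congr
  push_cast
  ring_nf
  simp [show ((2:ZMod 2)) = 0 from rfl]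

lemma PCA (hk : (1:Fin (m+2)) < k) :
    kEmb M n (m+2) 1 k (Pm M n) * kEmb M n (m+2) 0 1 (Pm M n)
      = kEmb M n (m+2) 0 1 (Pm M n) * kEmb M n (m+2) 0 k (Pm M n) := by
  have hk0 : k ≠ 0 := by rintro rfl; exact absurd hk (by simp [Fin.lt_def])
  have hk1 : k ≠ 1 := ne_of_gt hk
  have h01 : (0:Fin (m+2)) ≠ 1 := fin_zero_ne_one
  have h0k : (0:Fin (m+2)) ≠ k := Ne.symm hk0
  have h1k : (1:Fin (m+2)) ≠ k := Ne.symm hk1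
  ext f g
  rw [mulPP h1k h01, mulPP h01 h0k]
  have hq : (⇑(Equiv.swap (0:Fin (m+2)) 1) ∘ ⇑(Equiv.swap 1 k))
      = (⇑(Equiv.swap (0:Fin (m+2)) k) ∘ ⇑(Equiv.swap 0 1)) := by
    rw [← Equiv.Perm.coe_mul, ← Equiv.Perm.coe_mul, q2 k hk]
  rw [hq]
  refine if_congr Iff.rfl ?_ rfl
  have e1 : Equiv.swap (0:Fin (m+2)) 1 1 = 0 := Equiv.swap_apply_right _ _
  have e2 : Equiv.swap (0:Fin (m+2)) 1 k = k :=
    Equiv.swap_apply_of_ne_of_ne hk0 hk1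
  have e3 : Equiv.swap (0:Fin (m+2)) k 0 = k := Equiv.swap_apply_left _ _
  have e4 : Equiv.swap (0:Fin (m+2)) k 1 = 1 :=
    Equiv.swap_apply_of_ne_of_ne (Ne.symm h01) h1k
  have hW1 : W M 1 k (g ∘ ⇑(Equiv.swap 0 1)) = W M 1 k g :=
    W_comp _ (fun l hl1 hl2 => Equiv.swap_apply_of_ne_of_ne
      (ne_of_gt (lt_trans (by simp [Fin.lt_def]) hl1)) (ne_of_gt hl1)) g
  rw [e1, e2, e3, e4, hW1, W01, W01, W_zero_eq hk g]
  apply sgn_congr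
  push_cast
  ring_nf
  simp [show ((2:ZMod 2)) = 0 from rfl]

lemma PBA (hk : (1:Fin (m+2)) < k) :
    kEmb M n (m+2) 0 k (Pm M n) * kEmb M n (m+2) 0 1 (Pm M n)
      = kEmb M n (m+2) 0 1 (Pm M n) * kEmb M n (m+2) 1 k (Pm M n) := by
  have hk0 : k ≠ 0 := by rintro rfl; exact absurd hk (by simp [Fin.lt_def])
  have hk1 : k ≠ 1 := ne_of_gt hk
  have h01 : (0:Fin (m+2)) ≠ 1 := fin_zero_ne_one
  have h0k : (0:Fin (m+2)) ≠ k := Ne.symm hk0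
  have h1k : (1:Fin (m+2)) ≠ k := Ne.symm hk1
  ext f g
  rw [mulPP h0k h01, mulPP h01 h1k]
  have hq : (⇑(Equiv.swap (0:Fin (m+2)) 1) ∘ ⇑(Equiv.swap 0 k))
      = (⇑(Equiv.swap (1:Fin (m+2)) k) ∘ ⇑(Equiv.swap 0 1)) := by
    rw [← Equiv.Perm.coe_mul, ← Equiv.Perm.coe_mul, q3 k hk]
  rw [hq]
  refine if_congr Iff.rfl ?_ rfl
  have e1 : Equiv.swap (0:Fin (m+2)) 1 0 = 1 := Equiv.swap_apply_left _ _
  have e2 : Equiv.swap (0:Fin (m+2)) 1 k = k :=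
    Equiv.swap_apply_of_ne_of_ne hk0 hk1
  have e3 : Equiv.swap (1:Fin (m+2)) k 0 = 0 := Equiv.swap_apply_of_ne_of_ne h01 h0k
  have e4 : Equiv.swap (1:Fin (m+2)) k 1 = k := Equiv.swap_apply_left _ _
  have hW1 : W M 1 k (g ∘ ⇑(Equiv.swap 0 1)) = W M 1 k g :=
    W_comp _ (fun l hl1 hl2 => Equiv.swap_apply_of_ne_of_ne
      (ne_of_gt (lt_trans (by simp [Fin.lt_def]) hl1)) (ne_of_gt hl1)) g
  rw [e1, e2, e3, e4, W_zero_eq hk (g ∘ ⇑(Equiv.swap 0 1)), W01, W01,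
    show (g ∘ ⇑(Equiv.swap (0:Fin (m+2)) 1)) 1 = g 0 from by
      simp [Function.comp, Equiv.swap_apply_right], hW1]
  apply sgn_congr
  push_cast
  ring_nf
  simp [show ((2:ZMod 2)) = 0 from rfl]

lemma PCB (hk : (1:Fin (m+2)) < k) :
    kEmb M n (m+2) 1 k (Pm M n) * kEmb M n (m+2) 0 k (Pm M n)
      = kEmb M n (m+2) 0 1 (Pm M n) * kEmb M n (m+2) 1 k (Pm M n) := by
  have hk0 : k ≠ 0 := by rintro rfl; exact absurd hk (by simp [Fin.lt_def])
  have hk1 : k ≠ 1 := ne_of_gt hk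
  have h01 : (0:Fin (m+2)) ≠ 1 := fin_zero_ne_one
  have h0k : (0:Fin (m+2)) ≠ k := Ne.symm hk0
  have h1k : (1:Fin (m+2)) ≠ k := Ne.symm hk1
  ext f g
  rw [mulPP h1k h0k, mulPP h01 h1k]
  have hq : (⇑(Equiv.swap (0:Fin (m+2)) k) ∘ ⇑(Equiv.swap 1 k))
      = (⇑(Equiv.swap (1:Fin (m+2)) k) ∘ ⇑(Equiv.swap 0 1)) := by
    rw [← Equiv.Perm.coe_mul, ← Equiv.Perm.coe_mul, q4 k hk]
  rw [hq]
  refine if_congr Iff.rfl ?_ rfl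
  have e1 : Equiv.swap (0:Fin (m+2)) k 1 = 1 :=
    Equiv.swap_apply_of_ne_of_ne (Ne.symm h01) h1k
  have e2 : Equiv.swap (0:Fin (m+2)) k k = 0 := Equiv.swap_apply_right _ _
  have e3 : Equiv.swap (1:Fin (m+2)) k 0 = 0 := Equiv.swap_apply_of_ne_of_ne h01 h0k
  have e4 : Equiv.swap (1:Fin (m+2)) k 1 = k := Equiv.swap_apply_left _ _
  have hW1 : W M 1 k (g ∘ ⇑(Equiv.swap 0 k)) = W M 1 k g :=
    W_comp _ (fun l hl1 hl2 => Equiv.swap_apply_of_ne_of_ne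
      (ne_of_gt (lt_trans (by simp [Fin.lt_def]) hl1)) (ne_of_lt hl2)) g
  rw [e1, e2, e3, e4, hW1, W01, W_zero_eq hk g]
  apply sgn_congr
  push_cast
  ring_nf
  simp [show ((2:ZMod 2)) = 0 from rfl]

lemma PP_comm (hj : (1:Fin (m+2)) < j) (hk : (1:Fin (m+2)) < k) (hjk : j ≠ k) :
    kEmb M n (m+2) 0 j (Pm M n) * kEmb M n (m+2) 1 k (Pm M n)
      = kEmb M n (m+2) 1 k (Pm M n) * kEmb M n (m+2) 0 j (Pm M n) := by
  have hk0 : k ≠ 0 := by rintro rfl; exact absurd hk (by simp [Fin.lt_def])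
  have hk1 : k ≠ 1 := ne_of_gt hk
  have hj0 : j ≠ 0 := by rintro rfl; exact absurd hj (by simp [Fin.lt_def])
  have hj1 : j ≠ 1 := ne_of_gt hj
  have h01 : (0:Fin (m+2)) ≠ 1 := fin_zero_ne_one
  have h01lt : (0:Fin (m+2)) < 1 := by simp [Fin.lt_def]
  ext f g
  rw [mulPP (Ne.symm hj0) (Ne.symm hk1), mulPP (Ne.symm hk1) (Ne.symm hj0)]
  have hq : (⇑(Equiv.swap (1:Fin (m+2)) k) ∘ ⇑(Equiv.swap 0 j))
      = (⇑(Equiv.swap (0:Fin (m+2)) j) ∘ ⇑(Equiv.swap 1 k)) := by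
    rw [← Equiv.Perm.coe_mul, ← Equiv.Perm.coe_mul, q5 k j hj hk hjk]
  rw [hq]
  refine if_congr Iff.rfl ?_ rfl
  have e1 : Equiv.swap (1:Fin (m+2)) k 0 = 0 :=
    Equiv.swap_apply_of_ne_of_ne h01 (Ne.symm hk0)
  have e2 : Equiv.swap (1:Fin (m+2)) k j = j :=
    Equiv.swap_apply_of_ne_of_ne hj1 hjk
  have e3 : Equiv.swap (0:Fin (m+2)) j 1 = 1 :=
    Equiv.swap_apply_of_ne_of_ne (Ne.symm h01) (Ne.symm hj1)
  have e4 : Equiv.swap (0:Fin (m+2)) j k = k :=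
    Equiv.swap_apply_of_ne_of_ne hk0 (Ne.symm hjk)
  rw [e1, e2, e3, e4]
  rcases lt_or_gt_of_ne hjk with hlt | hgt
  · -- j < k
    have hX : W M 0 j (g ∘ ⇑(Equiv.swap 1 k)) + gr M (g 1) = W M 0 j g + gr M (g k) := by
      rw [Equiv.swap_comm 1 k]
      exact W_swap_mem h01lt hj
        (fun h => absurd h.2 (not_lt.2 hlt.le)) hk1 g
    have hY : W M 1 k (g ∘ ⇑(Equiv.swap 0 j)) + gr M (g j) = W M 1 k g + gr M (g 0) := by
      exact W_swap_mem hj hlt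
        (fun h => absurd h.1 (by simp [Fin.lt_def])) (Ne.symm hj0) g
    have hXc := congrArg (Nat.cast : ℕ → ZMod 2) hX
    push_cast at hXc
    have hYc := congrArg (Nat.cast : ℕ → ZMod 2) hY
    push_cast at hYc
    apply sgn_congr
    push_cast
    rw [zmod2_cancel hXc, zmod2_cancel hYc]
    ring_nf
    all_goals simp [show ((2:ZMod 2)) = 0 from rfl]
  · -- k < j
    have hX : W M 0 j (g ∘ ⇑(Equiv.swap 1 k)) = W M 0 j g :=
      W_swap_both h01lt hj (lt_trans h01lt hk) hgt g
    have hY : W M 1 k (g ∘ ⇑(Equiv.swap 0 j)) = W M 1 k g :=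
      W_comp _ (fun l hl1 hl2 => Equiv.swap_apply_of_ne_of_ne
        (ne_of_gt (lt_trans h01lt hl1)) (ne_of_lt (lt_trans hl2 hgt))) g
    rw [hX, hY]
    apply sgn_congr
    push_cast
    ring_nf
    all_goals simp [show ((2:ZMod 2)) = 0 from rfl]

end Monomial

end S7
namespace S7

open Matrix Finset Equiv

variable {M n m L : ℕ}

lemma affine_comm {A B : Ten n m} (h : A * B = B * A) (x y c d : ℂ) :
    (x • (1:Ten n m) - c • A) * (y • 1 - d • B)
      = (y • 1 - d • B) * (x • 1 - c • A) := by
  simp only [sub_mul, mul_sub, smul_mul_assoc, mul_smul_comm, one_mul, mul_one, smul_smul]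
  rw [h]
  module

lemma RR_comm {j k : Fin (m+2)} (hj : (1:Fin (m+2)) < j) (hk : (1:Fin (m+2)) < k)
    (hjk : j ≠ k) (hb w w' : ℂ) :
    kEmb M n (m+2) 0 j (Rm M n hb w) * kEmb M n (m+2) 1 k (Rm M n hb w')
      = kEmb M n (m+2) 1 k (Rm M n hb w') * kEmb M n (m+2) 0 j (Rm M n hb w) := by
  have hj0 : (0:Fin (m+2)) ≠ j := by
    rintro rfl; exact absurd hj (by simp [Fin.lt_def])
  have hk1 : (1:Fin (m+2)) ≠ k := Ne.symm (ne_of_gt hk)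
  rw [kEmb_Rm hb hj0 w, kEmb_Rm hb hk1 w']
  exact affine_comm (PP_comm hj hk hjk) _ _ _ _

lemma RRR {k : Fin (m+2)} (hk : (1:Fin (m+2)) < k) (hb y z : ℂ) :
    kEmb M n (m+2) 0 1 (Rm M n hb (y - z)) * kEmb M n (m+2) 0 k (Rm M n hb y)
        * kEmb M n (m+2) 1 k (Rm M n hb z)
      = kEmb M n (m+2) 1 k (Rm M n hb z) * kEmb M n (m+2) 0 k (Rm M n hb y)
        * kEmb M n (m+2) 0 1 (Rm M n hb (y - z)) := by
  have hk0 : k ≠ 0 := by rintro rfl; exact absurd hk (by simp [Fin.lt_def])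
  have hk1 : k ≠ 1 := ne_of_gt hk
  have h01 : (0:Fin (m+2)) ≠ 1 := fin_zero_ne_one
  have h0k : (0:Fin (m+2)) ≠ k := Ne.symm hk0
  have h1k : (1:Fin (m+2)) ≠ k := Ne.symm hk1
  rw [kEmb_Rm hb h01, kEmb_Rm hb h0k, kEmb_Rm hb h1k]
  set A := kEmb M n (m+2) 0 1 (Pm M n) with hA
  set B := kEmb M n (m+2) 0 k (Pm M n) with hB
  set C := kEmb M n (m+2) 1 k (Pm M n) with hC
  have hAA : A * A = 1 := PP_sq h01
  have hbc : B * C = A * B := PBC hk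
  have hca : C * A = A * B := PCA hk
  have hba : B * A = A * C := PBA hk
  have hcb : C * B = A * C := PCB hk
  have habc : A * B * C = B := by
    rw [mul_assoc, hbc, ← mul_assoc, hAA, one_mul]
  have hcba : C * B * A = B := by
    rw [hcb, mul_assoc, hca, ← mul_assoc, hAA, one_mul]
  simp only [sub_mul, mul_sub, smul_mul_assoc, mul_smul_comm, one_mul, mul_one, smul_smul]
  rw [habc, hcba, hbc, hca, hba, hcb]
  module

end S7
namespace S7

open Matrix Finset Equiv

variable {M n m L : ℕ}

lemma sgn_double (x y : ℕ) : ((-1:ℂ))^((x + x) * y) = 1 := by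
  have h : (x+x)*y = 2*(x*y) := by ring
  rw [h, pow_mul, neg_one_sq, one_pow]

lemma sum_pairs {m' : ℕ} (i j : Fin m') (hij : i ≠ j) (F : Fin m' → Fin n)
    (φ : (Fin m' → Fin n) → ℂ)
    (h0 : ∀ H, ¬ (∀ l, l ≠ i → l ≠ j → F l = H l) → φ H = 0) :
    ∑ H, φ H = ∑ c : Fin n, ∑ d : Fin n,
      φ (Function.update (Function.update F i c) j d) := by
  classical
  set ψ : Fin n × Fin n → (Fin m' → Fin n) :=
    fun p => Function.update (Function.update F i p.1) j p.2 with hψ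
  have hvan : ∀ H ∈ (Finset.univ : Finset (Fin m' → Fin n)),
      H ∉ Finset.univ.image ψ → φ H = 0 := by
    intro H _ hH
    apply h0
    intro hagree
    apply hH
    refine Finset.mem_image.2 ⟨(H i, H j), Finset.mem_univ _, ?_⟩
    funext l
    by_cases hlj : l = j
    · subst hlj; simp [hψ, Function.update_self]
    by_cases hli : l = i
    · subst hli
      simp only [hψ]
      rw [Function.update_of_ne hij, Function.update_self]
    · simp only [hψ]
      rw [Function.update_of_ne hlj, Function.update_of_ne hli]
      exact hagree l hli hlj
  calc ∑ H, φ H = ∑ H ∈ Finset.univ.image ψ, φ H :=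
        (Finset.sum_subset (Finset.subset_univ _) hvan).symm
    _ = ∑ p : Fin n × Fin n, φ (ψ p) := by
        refine Finset.sum_image ?_
        intro p _ q _ hpq
        have h1 := congrFun hpq j
        have h2 := congrFun hpq i
        simp only [hψ, Function.update_self] at h1
        simp only [hψ] at h2
        rw [Function.update_of_ne hij, Function.update_of_ne hij] at h2
        simp only [Function.update_self] at h2
        exact Prod.ext h2 h1
    _ = ∑ c : Fin n, ∑ d : Fin n, φ (ψ (c, d)) := Fintype.sum_prod_type _

lemma sum_cons {m' : ℕ} (φ : (Fin (m'+1) → Fin n) → ℂ) :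
    ∑ H, φ H = ∑ a : Fin n, ∑ h : Fin m' → Fin n, φ (Fin.cons a h) := by
  calc ∑ H, φ H = ∑ p : Fin n × (Fin m' → Fin n), φ (Fin.cons p.1 p.2) :=
      (Fintype.sum_equiv (Fin.consEquiv fun _ => Fin n)
        (fun p => φ (Fin.cons p.1 p.2)) φ (fun p => rfl)).symm
    _ = _ := Fintype.sum_prod_type _

lemma W_peel {m₁ : ℕ} (i j : Fin m₁) (x : Fin n) (h : Fin m₁ → Fin n) :
    W M i.succ j.succ (Fin.cons x h) = W M i j h := by
  unfold W
  rw [Finset.sum_filter, Finset.sum_filter, Fin.sum_univ_succ]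
  simp [Fin.cons_succ, Fin.succ_lt_succ_iff]

lemma W_zero_head {m₁ : ℕ} (j : Fin (m₁+1)) (x y : Fin n) (h : Fin m₁ → Fin n) :
    W M 0 j (Fin.cons x h) = W M 0 j (Fin.cons y h) := by
  unfold W
  refine Finset.sum_congr rfl fun l hl => ?_
  simp only [mem_filter, mem_univ, true_and] at hl
  obtain ⟨l', rfl⟩ : ∃ l', l = Fin.succ l' := by
    rcases Fin.eq_zero_or_eq_succ l with rfl | h'
    · exact absurd hl.1 (lt_irrefl _)
    · exact h'
  simp [Fin.cons_succ]

lemma Rm_even (hb w : ℂ) (p q : Fin n × Fin n) (h : Rm M n hb w p q ≠ 0) :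
    gr M p.1 + gr M p.2 = gr M q.1 + gr M q.2 := by
  by_cases hpq : p = q
  · subst hpq; rfl
  · have he : Rm M n hb w p q = - (hb * Pm M n p q) := by
      simp [Rm, Matrix.sub_apply, Matrix.smul_apply, Matrix.one_apply_ne hpq, smul_eq_mul]
    rw [he] at h
    have hP : Pm M n p q ≠ 0 := by
      intro h0; rw [h0] at h; simp at h
    rw [Pm_apply] at hP
    by_cases hc : p.1 = q.2 ∧ p.2 = q.1
    · rw [hc.1, hc.2]; ring
    · rw [if_neg hc] at hP; simp at hP

def T0l (M n L : ℕ) (hb : ℂ) (a : Fin L → ℂ) (u : ℂ) (ks : List (Fin L)) : Ten n (L+2) :=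
  (ks.map fun k => kEmb M n (L+2) 0 k.succ.succ (Rm M n hb (u - a k))).prod

def T1l (M n L : ℕ) (hb : ℂ) (a : Fin L → ℂ) (u : ℂ) (ks : List (Fin L)) : Ten n (L+2) :=
  (ks.map fun k => kEmb M n (L+2) 1 k.succ.succ (Rm M n hb (u - a k))).prod

def TSl (M n L : ℕ) (hb : ℂ) (a : Fin L → ℂ) (u : ℂ) (ks : List (Fin L)) : Ten n (L+1) :=
  (ks.map fun k => kEmb M n (L+1) 0 k.succ (Rm M n hb (u - a k))).prod

lemma cond_big0 {A B c d : Fin n} {f : Fin L → Fin n} (k : Fin L) :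
    ∀ l : Fin (L+2), l ≠ 0 → l ≠ k.succ.succ →
      (Fin.cons A (Fin.cons B f) : Fin (L+2) → Fin n) l = (Fin.cons c (Fin.cons B (Function.update f k d)) : Fin (L+2) → Fin n) l := by
  intro l h0 hj
  rcases Fin.eq_zero_or_eq_succ l with rfl | ⟨l', rfl⟩
  · exact absurd rfl h0
  rcases Fin.eq_zero_or_eq_succ l' with rfl | ⟨l'', rfl⟩
  · simp [Function.update_of_ne (Ne.symm (Fin.succ_ne_zero k))]
  · simp only [Fin.cons_succ]
    rw [Function.update_of_ne (fun h => hj (by rw [h]))]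

lemma cond_small0 {A c d : Fin n} {f : Fin L → Fin n} (k : Fin L) :
    ∀ l : Fin (L+1), l ≠ 0 → l ≠ k.succ →
      (Fin.cons A f : Fin (L+1) → Fin n) l = (Fin.cons c (Function.update f k d) : Fin (L+1) → Fin n) l := by
  intro l h0 hj
  rcases Fin.eq_zero_or_eq_succ l with rfl | ⟨l', rfl⟩
  · exact absurd rfl h0
  · simp only [Fin.cons_succ]
    rw [Function.update_of_ne (fun h => hj (by rw [h]))]

lemma cond_big1 {A B c d : Fin n} {f : Fin L → Fin n} (k : Fin L) :
    ∀ l : Fin (L+2), l ≠ 1 → l ≠ k.succ.succ →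
      (Fin.cons A (Fin.cons B f) : Fin (L+2) → Fin n) l = (Fin.cons A (Fin.cons c (Function.update f k d)) : Fin (L+2) → Fin n) l := by
  intro l h1 hj
  rcases Fin.eq_zero_or_eq_succ l with rfl | ⟨l', rfl⟩
  · simp
  rcases Fin.eq_zero_or_eq_succ l' with rfl | ⟨l'', rfl⟩
  · exact absurd (Fin.succ_zero_eq_one) (fun h => h1 h)
  · simp only [Fin.cons_succ]
    rw [Function.update_of_ne (fun h => hj (by rw [h]))]

end S7
namespace S7

open Matrix Finset Equiv

variable {M n m L : ℕ}

lemma slot_lt (k : Fin L) : (1:Fin (L+2)) < k.succ.succ := by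
  rw [Fin.lt_def]
  simp [Fin.val_succ]

lemma cons2_one (A B : Fin n) (t : Fin L → Fin n) :
    (Fin.cons A (Fin.cons B t) : Fin (L+2) → Fin n) 1 = B := by
  rw [← Fin.succ_zero_eq_one, Fin.cons_succ, Fin.cons_zero]

lemma W_big0 (k : Fin L) (c B : Fin n) (t : Fin L → Fin n) :
    W M (0:Fin (L+2)) k.succ.succ (Fin.cons c (Fin.cons B t))
      = gr M B + W M (0:Fin (L+1)) k.succ (Fin.cons c t) := by
  rw [W_zero_eq (slot_lt k), cons2_one, ← Fin.succ_zero_eq_one, W_peel]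
  exact congrArg (fun w => gr M B + w) (W_zero_head _ _ _ _)

lemma W_big1 (k : Fin L) (A c : Fin n) (t : Fin L → Fin n) :
    W M (1:Fin (L+2)) k.succ.succ (Fin.cons A (Fin.cons c t))
      = W M (0:Fin (L+1)) k.succ (Fin.cons c t) := by
  rw [← Fin.succ_zero_eq_one, W_peel]

lemma updL0 (k : Fin L) (A B c d : Fin n) (f : Fin L → Fin n) :
    Function.update (Function.update (Fin.cons A (Fin.cons B f) : Fin (L+2) → Fin n) 0 c)
        k.succ.succ d
      = Fin.cons c (Fin.cons B (Function.update f k d)) := by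
  rw [Fin.update_cons_zero, ← Fin.cons_update, ← Fin.cons_update]

lemma updS0 (k : Fin L) (A c d : Fin n) (f : Fin L → Fin n) :
    Function.update (Function.update (Fin.cons A f : Fin (L+1) → Fin n) 0 c) k.succ d
      = Fin.cons c (Function.update f k d) := by
  rw [Fin.update_cons_zero, ← Fin.cons_update]

lemma updL1 (k : Fin L) (A B c d : Fin n) (f : Fin L → Fin n) :
    Function.update (Function.update (Fin.cons A (Fin.cons B f) : Fin (L+2) → Fin n) 1 c)
        k.succ.succ d
      = Fin.cons A (Fin.cons c (Function.update f k d)) := by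
  rw [← Fin.succ_zero_eq_one, ← Fin.cons_update, Fin.update_cons_zero, ← Fin.cons_update,
    ← Fin.cons_update]

lemma claim0 (hb : ℂ) (a : Fin L → ℂ) (u : ℂ) (ks : List (Fin L))
    (B D C : Fin n) (g : Fin L → Fin n) :
    ∀ (A : Fin n) (f : Fin L → Fin n),
    T0l M n L hb a u ks (Fin.cons A (Fin.cons B f)) (Fin.cons C (Fin.cons D g))
      = (if B = D then 1 else 0) * (-1:ℂ)^((gr M A + gr M C) * gr M D)
          * TSl M n L hb a u ks (Fin.cons A f) (Fin.cons C g) := by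
  induction ks with
  | nil =>
    intro A f
    simp only [T0l, TSl, List.map_nil, List.prod_nil, Matrix.one_apply]
    by_cases hBD : B = D
    · subst hBD
      rw [if_pos rfl, one_mul]
      by_cases hAC : A = C
      · subst hAC
        by_cases hfg : f = g
        · subst hfg
          rw [if_pos rfl, if_pos rfl, sgn_double, one_mul]
        · rw [if_neg, if_neg, mul_zero]
          · rintro h; exact hfg (Fin.cons_inj.1 h).2
          · rintro h
            exact hfg (Fin.cons_inj.1 (Fin.cons_inj.1 h).2).2
      · rw [if_neg, if_neg, mul_zero]
        · rintro h; exact hAC (Fin.cons_inj.1 h).1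
        · rintro h; exact hAC (Fin.cons_inj.1 h).1
    · rw [if_neg hBD, zero_mul, zero_mul, if_neg]
      rintro h
      exact hBD (Fin.cons_inj.1 (Fin.cons_inj.1 h).2).1
  | cons k ks ih =>
    intro A f
    have hsplitL : T0l M n L hb a u (k :: ks)
        = kEmb M n (L+2) 0 k.succ.succ (Rm M n hb (u - a k)) * T0l M n L hb a u ks := by
      simp [T0l]
    have hsplitS : TSl M n L hb a u (k :: ks)
        = kEmb M n (L+1) 0 k.succ (Rm M n hb (u - a k)) * TSl M n L hb a u ks := by
      simp [TSl]
    rw [hsplitL, hsplitS, Matrix.mul_apply, Matrix.mul_apply]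
    rw [sum_pairs 0 k.succ.succ (Ne.symm (Fin.succ_ne_zero _)) (Fin.cons A (Fin.cons B f))
      (fun H => kEmb M n (L+2) 0 k.succ.succ (Rm M n hb (u - a k))
          (Fin.cons A (Fin.cons B f)) H
        * T0l M n L hb a u ks H (Fin.cons C (Fin.cons D g)))
      (fun H hH => by
        have h00 : kEmb M n (L+2) 0 k.succ.succ (Rm M n hb (u - a k))
            (Fin.cons A (Fin.cons B f)) H = 0 := by
          rw [kEmb_apply, if_neg hH]; ring
        simp [h00])]
    rw [sum_pairs 0 k.succ (Ne.symm (Fin.succ_ne_zero _)) (Fin.cons A f)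
      (fun H => kEmb M n (L+1) 0 k.succ (Rm M n hb (u - a k)) (Fin.cons A f) H
        * TSl M n L hb a u ks H (Fin.cons C g))
      (fun H hH => by
        have h00 : kEmb M n (L+1) 0 k.succ (Rm M n hb (u - a k)) (Fin.cons A f) H = 0 := by
          rw [kEmb_apply, if_neg hH]; ring
        simp [h00])]
    rw [Finset.mul_sum]
    refine Finset.sum_congr rfl fun c _ => ?_
    rw [Finset.mul_sum]
    refine Finset.sum_congr rfl fun d _ => ?_
    rw [updL0, updS0, ih c (Function.update f k d)]
    by_cases hBD : B = D
    · subst hBD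
      rw [if_pos rfl, one_mul, one_mul]
      rw [kEmb_apply, if_pos (cond_big0 k), kEmb_apply, if_pos (cond_small0 k)]
      simp only [Fin.cons_zero, Fin.cons_succ, Function.update_self, W_big0]
      by_cases hX : Rm M n hb (u - a k) (A, f k) (c, d) = 0
      · rw [hX]; ring
      · have hc : gr M A + gr M (f k) = gr M c + gr M d :=
          Rm_even hb (u - a k) (A, f k) (c, d) hX
        have hcc := congrArg (Nat.cast : ℕ → ZMod 2) hc
        push_cast at hcc
        set X := Rm M n hb (u - a k) (A, f k) (c, d) with hXdef
        set T := TSl M n L hb a u ks (Fin.cons c (Function.update f k d)) (Fin.cons C g)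
          with hTdef
        set Ws := W M (0:Fin (L+1)) k.succ (Fin.cons c (Function.update f k d)) with hWdef
        have hsgn : (-1:ℂ)^((gr M (f k) + gr M d) * (gr M B + Ws))
              * (-1:ℂ)^((gr M c + gr M C) * gr M B)
            = (-1:ℂ)^((gr M A + gr M C) * gr M B) * (-1:ℂ)^((gr M (f k) + gr M d) * Ws) := by
          rw [← pow_add, ← pow_add]
          apply sgn_congr
          push_cast
          rw [zmod2_cancel hcc]
          ring_nf
          all_goals simp [show ((2:ZMod 2)) = 0 from rfl]
        linear_combination (X * T) * hsgn
    · rw [if_neg hBD]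
      ring

end S7
namespace S7

open Matrix Finset Equiv

variable {M n m L : ℕ}

lemma claim1 (hb : ℂ) (a : Fin L → ℂ) (u : ℂ) (ks : List (Fin L))
    (A C D : Fin n) (g : Fin L → Fin n) :
    ∀ (B : Fin n) (f : Fin L → Fin n),
    T1l M n L hb a u ks (Fin.cons A (Fin.cons B f)) (Fin.cons C (Fin.cons D g))
      = (if A = C then 1 else 0) * TSl M n L hb a u ks (Fin.cons B f) (Fin.cons D g) := by
  induction ks with
  | nil =>
    intro B f
    simp only [T1l, TSl, List.map_nil, List.prod_nil, Matrix.one_apply]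
    by_cases hAC : A = C
    · subst hAC
      rw [if_pos rfl, one_mul]
      by_cases h2 : (Fin.cons B f : Fin (L+1) → Fin n) = Fin.cons D g
      · rw [if_pos h2, if_pos (Fin.cons_inj.2 ⟨rfl, h2⟩)]
      · rw [if_neg h2, if_neg (fun h => h2 (Fin.cons_inj.1 h).2)]
    · rw [if_neg hAC, zero_mul, if_neg (fun h => hAC (Fin.cons_inj.1 h).1)]
  | cons k ks ih =>
    intro B f
    have hsplitL : T1l M n L hb a u (k :: ks)
        = kEmb M n (L+2) 1 k.succ.succ (Rm M n hb (u - a k)) * T1l M n L hb a u ks := by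
      simp [T1l]
    have hsplitS : TSl M n L hb a u (k :: ks)
        = kEmb M n (L+1) 0 k.succ (Rm M n hb (u - a k)) * TSl M n L hb a u ks := by
      simp [TSl]
    rw [hsplitL, hsplitS, Matrix.mul_apply, Matrix.mul_apply]
    rw [sum_pairs 1 k.succ.succ (ne_of_lt (slot_lt k)) (Fin.cons A (Fin.cons B f))
      (fun H => kEmb M n (L+2) 1 k.succ.succ (Rm M n hb (u - a k))
          (Fin.cons A (Fin.cons B f)) H
        * T1l M n L hb a u ks H (Fin.cons C (Fin.cons D g)))
      (fun H hH => by
        have h00 : kEmb M n (L+2) 1 k.succ.succ (Rm M n hb (u - a k))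
            (Fin.cons A (Fin.cons B f)) H = 0 := by
          rw [kEmb_apply, if_neg hH]; ring
        simp [h00])]
    rw [sum_pairs 0 k.succ (Ne.symm (Fin.succ_ne_zero _)) (Fin.cons B f)
      (fun H => kEmb M n (L+1) 0 k.succ (Rm M n hb (u - a k)) (Fin.cons B f) H
        * TSl M n L hb a u ks H (Fin.cons D g))
      (fun H hH => by
        have h00 : kEmb M n (L+1) 0 k.succ (Rm M n hb (u - a k)) (Fin.cons B f) H = 0 := by
          rw [kEmb_apply, if_neg hH]; ring
        simp [h00])]
    rw [Finset.mul_sum]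
    refine Finset.sum_congr rfl fun c _ => ?_
    rw [Finset.mul_sum]
    refine Finset.sum_congr rfl fun d _ => ?_
    rw [updL1, updS0, ih c (Function.update f k d)]
    rw [kEmb_apply, if_pos (cond_big1 k), kEmb_apply, if_pos (cond_small0 k)]
    simp only [Fin.cons_zero, Fin.cons_succ, Function.update_self, W_big1, cons2_one]
    ring

lemma RTT (hb : ℂ) (a : Fin L → ℂ) (u v : ℂ) (ks : List (Fin L)) :
    ks.Pairwise (· ≠ ·) →
    kEmb M n (L+2) 0 1 (Rm M n hb (u - v)) * T0l M n L hb a u ks * T1l M n L hb a v ks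
      = T1l M n L hb a v ks * T0l M n L hb a u ks
          * kEmb M n (L+2) 0 1 (Rm M n hb (u - v)) := by
  induction ks with
  | nil => intro _; simp [T0l, T1l]
  | cons k ks ih =>
    intro hks
    rw [List.pairwise_cons] at hks
    obtain ⟨hk1, hk2⟩ := hks
    have hsplit0 : T0l M n L hb a u (k :: ks)
        = kEmb M n (L+2) 0 k.succ.succ (Rm M n hb (u - a k)) * T0l M n L hb a u ks := by
      simp [T0l]
    have hsplit1 : T1l M n L hb a v (k :: ks)
        = kEmb M n (L+2) 1 k.succ.succ (Rm M n hb (v - a k)) * T1l M n L hb a v ks := by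
      simp [T1l]
    rw [hsplit0, hsplit1]
    set R := kEmb M n (L+2) 0 1 (Rm M n hb (u - v)) with hR
    set Bm := kEmb M n (L+2) 0 k.succ.succ (Rm M n hb (u - a k)) with hBm
    set Cm := kEmb M n (L+2) 1 k.succ.succ (Rm M n hb (v - a k)) with hCm
    set P := T0l M n L hb a u ks with hP
    set Q := T1l M n L hb a v ks with hQ
    have hPC' : P * Cm = Cm * P := by
      have hcomm : Commute Cm P := by
        rw [hP]
        unfold T0l
        apply Commute.list_prod_right
        intro x hx
        rcases List.mem_map.1 hx with ⟨k', hk', rfl⟩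
        have hne : k'.succ.succ ≠ k.succ.succ := fun h =>
          hk1 k' hk' (Fin.succ_injective _ (Fin.succ_injective _ h)).symm
        exact (RR_comm (slot_lt k') (slot_lt k) hne hb (u - a k') (v - a k)).symm
      exact hcomm.symm.eq
    have hQB' : Bm * Q = Q * Bm := by
      have hcomm : Commute Bm Q := by
        rw [hQ]
        unfold T1l
        apply Commute.list_prod_right
        intro x hx
        rcases List.mem_map.1 hx with ⟨k', hk', rfl⟩
        have hne : k.succ.succ ≠ k'.succ.succ := fun h =>
          hk1 k' hk' (Fin.succ_injective _ (Fin.succ_injective _ h))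
        exact RR_comm (slot_lt k) (slot_lt k') hne hb (u - a k) (v - a k')
      exact hcomm.eq
    have hYBE : R * Bm * Cm = Cm * Bm * R := by
      rw [hR, hBm, hCm, show u - v = (u - a k) - (v - a k) from by ring]
      exact RRR (slot_lt k) hb (u - a k) (v - a k)
    have ih' : R * (P * Q) = Q * (P * R) := by
      rw [← mul_assoc, ih hk2, mul_assoc]
    have h1 : P * (Cm * Q) = Cm * (P * Q) := by
      rw [← mul_assoc, hPC', mul_assoc]
    have h3 : R * (Bm * (Cm * (P * Q))) = Cm * (Bm * (R * (P * Q))) := by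
      rw [← mul_assoc, ← mul_assoc, hYBE, mul_assoc, mul_assoc]
    have h2 : Bm * (Q * (P * R)) = Q * (Bm * (P * R)) := by
      rw [← mul_assoc, hQB', mul_assoc]
    simp only [mul_assoc]
    rw [h1, h3, ih', h2]

end S7
namespace S7

open Matrix Finset Equiv

variable {M n m L : ℕ}

/-- `A ↦ A ⊗ 1` on the two auxiliary slots: partial trace with weights `s`. -/
def trg (M : ℕ) {n L : ℕ} (s : Fin n → ℂ) (Z : Ten n (L+2)) : Ten n L :=
  Matrix.of fun f g => ∑ p : Fin n × Fin n,
    s p.1 * s p.2 * Z (Fin.cons p.1 (Fin.cons p.2 f)) (Fin.cons p.1 (Fin.cons p.2 g))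

lemma upd01 (x y c d : Fin n) (f : Fin L → Fin n) :
    Function.update (Function.update (Fin.cons x (Fin.cons y f) : Fin (L+2) → Fin n) 0 c) 1 d
      = Fin.cons c (Fin.cons d f) := by
  rw [Fin.update_cons_zero, ← Fin.succ_zero_eq_one, ← Fin.cons_update, Fin.update_cons_zero]

lemma cond01 (x y c d : Fin n) (f : Fin L → Fin n) :
    ∀ l : Fin (L+2), l ≠ 0 → l ≠ 1 →
      (Fin.cons x (Fin.cons y f) : Fin (L+2) → Fin n) l
        = (Fin.cons c (Fin.cons d f) : Fin (L+2) → Fin n) l := by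
  intro l h0 h1
  rcases Fin.eq_zero_or_eq_succ l with rfl | ⟨l', rfl⟩
  · exact absurd rfl h0
  rcases Fin.eq_zero_or_eq_succ l' with rfl | ⟨l'', rfl⟩
  · exact absurd Fin.succ_zero_eq_one (fun h => h1 h)
  · simp

lemma sum_pairs' {m' : ℕ} (i j : Fin m') (hij : i ≠ j) (F : Fin m' → Fin n)
    (φ : (Fin m' → Fin n) → ℂ)
    (h0 : ∀ H, ¬ (∀ l, l ≠ i → l ≠ j → F l = H l) → φ H = 0) :
    ∑ H, φ H = ∑ p : Fin n × Fin n,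
      φ (Function.update (Function.update F i p.1) j p.2) := by
  rw [sum_pairs i j hij F φ h0]
  exact (Fintype.sum_prod_type' fun c d =>
    φ (Function.update (Function.update F i c) j d)).symm

lemma W01_zero_pow (x : ℕ) (g : Fin (L+2) → Fin n) :
    ((-1:ℂ)) ^ (x * W M (0:Fin (L+2)) 1 g) = 1 := by
  rw [W01, Nat.mul_zero, pow_zero]

lemma kEmb01_apply (X : E2 n) (x y c d : Fin n) (f f' : Fin L → Fin n) :
    kEmb M n (L+2) 0 1 X (Fin.cons x (Fin.cons y f)) (Fin.cons c (Fin.cons d f'))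
      = (if ∀ l : Fin (L+2), l ≠ 0 → l ≠ 1 →
            (Fin.cons x (Fin.cons y f) : Fin (L+2) → Fin n) l
              = (Fin.cons c (Fin.cons d f') : Fin (L+2) → Fin n) l
          then (1:ℂ) else 0) * X (x, y) (c, d) := by
  rw [kEmb_apply]
  rw [show W M (0:Fin (L+2)) 1 (Fin.cons c (Fin.cons d f')) = 0 from W01 _]
  simp only [Fin.cons_zero, cons2_one, Nat.mul_zero, pow_zero, mul_one]

lemma mul01 (X Y : E2 n) :
    (kEmb M n (L+2) 0 1 X) * (kEmb M n (L+2) 0 1 Y) = kEmb M n (L+2) 0 1 (X * Y) := by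
  ext F G
  rw [Matrix.mul_apply]
  rw [sum_pairs' 0 1 fin_zero_ne_one F
    (fun H => kEmb M n (L+2) 0 1 X F H * kEmb M n (L+2) 0 1 Y H G)
    (fun H hH => by
      have h00 : kEmb M n (L+2) 0 1 X F H = 0 := by
        rw [kEmb_apply, if_neg hH]; ring
      simp [h00])]
  rw [kEmb_apply, Matrix.mul_apply]
  rw [show W M (0:Fin (L+2)) 1 G = 0 from W01 _]
  simp only [Nat.mul_zero, pow_zero, mul_one]
  rw [Finset.mul_sum]
  refine Finset.sum_congr rfl fun p _ => ?_
  have hHF : ∀ l : Fin (L+2), l ≠ 0 → l ≠ 1 →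
      F l = (Function.update (Function.update F 0 p.1) 1 p.2) l := by
    intro l h0 h1
    rw [Function.update_of_ne h1, Function.update_of_ne h0]
  have hH0 : (Function.update (Function.update F 0 p.1) 1 p.2) 0 = p.1 := by
    rw [Function.update_of_ne fin_zero_ne_one, Function.update_self]
  have hH1 : (Function.update (Function.update F 0 p.1) 1 p.2) 1 = p.2 := by
    rw [Function.update_self]
  rw [kEmb_apply, kEmb_apply, if_pos hHF, hH0, hH1]
  rw [show W M (0:Fin (L+2)) 1 (Function.update (Function.update F 0 p.1) 1 p.2) = 0
    from W01 _]
  have hcond : (∀ l : Fin (L+2), l ≠ 0 → l ≠ 1 →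
      (Function.update (Function.update F 0 p.1) 1 p.2) l = G l)
      ↔ (∀ l : Fin (L+2), l ≠ 0 → l ≠ 1 → F l = G l) := by
    constructor
    · intro h l h0 h1
      rw [hHF l h0 h1]; exact h l h0 h1
    · intro h l h0 h1
      rw [← hHF l h0 h1]; exact h l h0 h1
  rw [if_congr hcond rfl rfl]
  rw [show W M (0:Fin (L+2)) 1 G = 0 from W01 _]
  simp only [Nat.mul_zero, pow_zero, mul_one]
  ring

lemma trg_cyc (s : Fin n → ℂ) (Bq : E2 n)
    (hB : ∀ p q : Fin n × Fin n, s p.1 * s p.2 * Bq p q = s q.1 * s q.2 * Bq p q)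
    (Z : Ten n (L+2)) :
    trg M s (kEmb M n (L+2) 0 1 Bq * Z) = trg M s (Z * kEmb M n (L+2) 0 1 Bq) := by
  ext f g
  simp only [trg, Matrix.of_apply]
  have hL : ∀ p : Fin n × Fin n,
      (kEmb M n (L+2) 0 1 Bq * Z) (Fin.cons p.1 (Fin.cons p.2 f))
          (Fin.cons p.1 (Fin.cons p.2 g))
        = ∑ q : Fin n × Fin n, Bq p q *
            Z (Fin.cons q.1 (Fin.cons q.2 f)) (Fin.cons p.1 (Fin.cons p.2 g)) := by
    intro p
    rw [Matrix.mul_apply]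
    rw [sum_pairs' 0 1 fin_zero_ne_one (Fin.cons p.1 (Fin.cons p.2 f))
      (fun H => kEmb M n (L+2) 0 1 Bq (Fin.cons p.1 (Fin.cons p.2 f)) H
        * Z H (Fin.cons p.1 (Fin.cons p.2 g)))
      (fun H hH => by
        have h00 : kEmb M n (L+2) 0 1 Bq (Fin.cons p.1 (Fin.cons p.2 f)) H = 0 := by
          rw [kEmb_apply, if_neg hH]; ring
        simp [h00])]
    refine Finset.sum_congr rfl fun q _ => ?_
    rw [upd01, kEmb01_apply, if_pos (cond01 _ _ _ _ _)]
    ring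
  have hR : ∀ p : Fin n × Fin n,
      (Z * kEmb M n (L+2) 0 1 Bq) (Fin.cons p.1 (Fin.cons p.2 f))
          (Fin.cons p.1 (Fin.cons p.2 g))
        = ∑ q : Fin n × Fin n, Bq q p *
            Z (Fin.cons p.1 (Fin.cons p.2 f)) (Fin.cons q.1 (Fin.cons q.2 g)) := by
    intro p
    rw [Matrix.mul_apply]
    rw [sum_pairs' 0 1 fin_zero_ne_one (Fin.cons p.1 (Fin.cons p.2 g))
      (fun H => Z (Fin.cons p.1 (Fin.cons p.2 f)) H
        * kEmb M n (L+2) 0 1 Bq H (Fin.cons p.1 (Fin.cons p.2 g)))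
      (fun H hH => by
        have h00 : kEmb M n (L+2) 0 1 Bq H (Fin.cons p.1 (Fin.cons p.2 g)) = 0 := by
          rw [kEmb_apply, if_neg (fun hc => hH (fun l h0 h1 => (hc l h0 h1).symm))]; ring
        simp [h00])]
    refine Finset.sum_congr rfl fun q _ => ?_
    rw [upd01, kEmb01_apply, if_pos (fun l h0 h1 => (cond01 _ _ _ _ _ l h0 h1).symm)]
    ring
  simp only [hL, hR, Finset.mul_sum]
  rw [Finset.sum_comm]
  refine Finset.sum_congr rfl fun p _ => Finset.sum_congr rfl fun q _ => ?_
  calc s q.1 * s q.2 * (Bq q p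
          * Z (Fin.cons p.1 (Fin.cons p.2 f)) (Fin.cons q.1 (Fin.cons q.2 g)))
      = (s q.1 * s q.2 * Bq q p)
          * Z (Fin.cons p.1 (Fin.cons p.2 f)) (Fin.cons q.1 (Fin.cons q.2 g)) := by ring
    _ = (s p.1 * s p.2 * Bq q p)
          * Z (Fin.cons p.1 (Fin.cons p.2 f)) (Fin.cons q.1 (Fin.cons q.2 g)) := by
        rw [hB q p]
    _ = _ := by ring

end S7
namespace S7

open Matrix Finset Equiv

variable {M n m L : ℕ}

lemma Pm_sq : Pm M n * Pm M n = (1 : E2 n) := by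
  ext p q
  rw [Matrix.mul_apply, Finset.sum_eq_single ((q.2, q.1) : Fin n × Fin n)]
  · rw [Pm_apply, Pm_apply, Matrix.one_apply]
    by_cases hpq : p = q
    · subst hpq
      rw [if_pos ⟨rfl, rfl⟩, if_pos ⟨rfl, rfl⟩, if_pos rfl, ← pow_add]
      refine Eq.trans (sgn_congr (b := 0) ?_) (pow_zero _)
      push_cast
      ring_nf
      all_goals simp [show ((2:ZMod 2)) = 0 from rfl]
    · rw [if_neg (fun hc : p.1 = (q.2, q.1).2 ∧ p.2 = (q.2, q.1).1 =>
        hpq (Prod.ext hc.1 hc.2)), if_neg hpq, zero_mul]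
  · intro r _ hr
    rw [Pm_apply r q, if_neg (fun hc : r.1 = q.2 ∧ r.2 = q.1 =>
      hr (Prod.ext hc.1 hc.2)), mul_zero]
  · intro h; exact absurd (Finset.mem_univ _) h

lemma Rm_inv_right (hb w : ℂ) :
    Rm M n hb w * (w • (1:E2 n) + hb • Pm M n) = (w*w - hb*hb) • (1:E2 n) := by
  simp only [Rm, sub_mul, mul_add, smul_mul_assoc, mul_smul_comm, one_mul, mul_one,
    smul_smul, Pm_sq]
  module

lemma Rm_inv_left (hb w : ℂ) :
    (w • (1:E2 n) + hb • Pm M n) * Rm M n hb w = (w*w - hb*hb) • (1:E2 n) := by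
  simp only [Rm, mul_sub, add_mul, smul_mul_assoc, mul_smul_comm, one_mul, mul_one,
    smul_smul, Pm_sq]
  module

lemma bal (s : Fin n → ℂ) (x y : ℂ) (p q : Fin n × Fin n) :
    s p.1 * s p.2 * (x • (1:E2 n) + y • Pm M n) p q
      = s q.1 * s q.2 * (x • (1:E2 n) + y • Pm M n) p q := by
  by_cases hpq : p = q
  · subst hpq; rfl
  · rw [Matrix.add_apply, Matrix.smul_apply, Matrix.smul_apply,
      Matrix.one_apply_ne hpq, Pm_apply, smul_eq_mul, smul_eq_mul, mul_zero, zero_add]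
    by_cases hc : p.1 = q.2 ∧ p.2 = q.1
    · rw [hc.1, hc.2]; ring
    · rw [if_neg hc]; ring

lemma Rm_plus (hb w : ℂ) : Rm M n hb w = w • (1:E2 n) + (-hb) • Pm M n := by
  rw [Rm, sub_eq_add_neg, neg_smul]

def stlM (M n L : ℕ) (hb : ℂ) (a : Fin L → ℂ) (s : Fin n → ℂ) (u : ℂ)
    (ks : List (Fin L)) : Ten n L :=
  Matrix.of fun f g => ∑ x : Fin n, s x * TSl M n L hb a u ks (Fin.cons x f) (Fin.cons x g)

lemma trg_T0T1 (hb : ℂ) (a : Fin L → ℂ) (s : Fin n → ℂ) (u v : ℂ) (ks : List (Fin L)) :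
    trg M s (T0l M n L hb a u ks * T1l M n L hb a v ks)
      = stlM M n L hb a s u ks * stlM M n L hb a s v ks := by
  ext f g
  simp only [trg, stlM, Matrix.of_apply]
  rw [Matrix.mul_apply]
  have hinner : ∀ x y : Fin n,
      (T0l M n L hb a u ks * T1l M n L hb a v ks)
          (Fin.cons x (Fin.cons y f)) (Fin.cons x (Fin.cons y g))
        = ∑ h : Fin L → Fin n,
            TSl M n L hb a u ks (Fin.cons x f) (Fin.cons x h)
              * TSl M n L hb a v ks (Fin.cons y h) (Fin.cons y g) := by
    intro x y
    rw [Matrix.mul_apply]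
    calc ∑ H, T0l M n L hb a u ks (Fin.cons x (Fin.cons y f)) H
            * T1l M n L hb a v ks H (Fin.cons x (Fin.cons y g))
        = ∑ c : Fin n, ∑ H' : Fin (L+1) → Fin n,
            T0l M n L hb a u ks (Fin.cons x (Fin.cons y f)) (Fin.cons c H')
            * T1l M n L hb a v ks (Fin.cons c H') (Fin.cons x (Fin.cons y g)) := sum_cons _
      _ = ∑ c : Fin n, ∑ d : Fin n, ∑ h : Fin L → Fin n,
            T0l M n L hb a u ks (Fin.cons x (Fin.cons y f)) (Fin.cons c (Fin.cons d h))
            * T1l M n L hb a v ks (Fin.cons c (Fin.cons d h))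
                (Fin.cons x (Fin.cons y g)) :=
          Finset.sum_congr rfl fun c _ => sum_cons _
      _ = ∑ c : Fin n, ∑ d : Fin n, ∑ h : Fin L → Fin n,
            ((if y = d then (1:ℂ) else 0) * (-1:ℂ)^((gr M x + gr M c) * gr M d)
              * TSl M n L hb a u ks (Fin.cons x f) (Fin.cons c h))
            * ((if c = x then (1:ℂ) else 0)
              * TSl M n L hb a v ks (Fin.cons d h) (Fin.cons y g)) := by
          refine Finset.sum_congr rfl fun c _ => Finset.sum_congr rfl fun d _ =>
            Finset.sum_congr rfl fun h _ => ?_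
          rw [claim0 hb a u ks y d c h x f, claim1 hb a v ks c x y g d h]
      _ = ∑ h : Fin L → Fin n,
            TSl M n L hb a u ks (Fin.cons x f) (Fin.cons x h)
              * TSl M n L hb a v ks (Fin.cons y h) (Fin.cons y g) := by
          rw [Finset.sum_eq_single x
            (fun c _ hc => Finset.sum_eq_zero fun d _ => Finset.sum_eq_zero fun h _ => by
              rw [if_neg hc]; ring)
            (fun hx => absurd (Finset.mem_univ x) hx)]
          rw [Finset.sum_eq_single y
            (fun d _ hd => Finset.sum_eq_zero fun h _ => by
              rw [if_neg (fun hyd => hd hyd.symm)]; ring)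
            (fun hy => absurd (Finset.mem_univ y) hy)]
          refine Finset.sum_congr rfl fun h _ => ?_
          rw [if_pos rfl, if_pos rfl, sgn_double]
          ring
  calc ∑ p : Fin n × Fin n, s p.1 * s p.2
          * (T0l M n L hb a u ks * T1l M n L hb a v ks)
            (Fin.cons p.1 (Fin.cons p.2 f)) (Fin.cons p.1 (Fin.cons p.2 g))
      = ∑ x : Fin n, ∑ y : Fin n, ∑ h : Fin L → Fin n,
          (s x * TSl M n L hb a u ks (Fin.cons x f) (Fin.cons x h))
          * (s y * TSl M n L hb a v ks (Fin.cons y h) (Fin.cons y g)) := by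
        rw [Fintype.sum_prod_type]
        refine Finset.sum_congr rfl fun x _ => Finset.sum_congr rfl fun y _ => ?_
        rw [hinner x y, Finset.mul_sum]
        exact Finset.sum_congr rfl fun h _ => by ring
    _ = ∑ x : Fin n, ∑ h : Fin L → Fin n, ∑ y : Fin n,
          (s x * TSl M n L hb a u ks (Fin.cons x f) (Fin.cons x h))
          * (s y * TSl M n L hb a v ks (Fin.cons y h) (Fin.cons y g)) :=
        Finset.sum_congr rfl fun x _ => Finset.sum_comm
    _ = ∑ h : Fin L → Fin n, ∑ x : Fin n, ∑ y : Fin n,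
          (s x * TSl M n L hb a u ks (Fin.cons x f) (Fin.cons x h))
          * (s y * TSl M n L hb a v ks (Fin.cons y h) (Fin.cons y g)) :=
        Finset.sum_comm
    _ = ∑ h : Fin L → Fin n,
          (∑ x : Fin n, s x * TSl M n L hb a u ks (Fin.cons x f) (Fin.cons x h))
          * (∑ y : Fin n, s y * TSl M n L hb a v ks (Fin.cons y h) (Fin.cons y g)) :=
        Finset.sum_congr rfl fun h _ => by rw [Finset.sum_mul_sum]

lemma trg_T1T0 (hb : ℂ) (a : Fin L → ℂ) (s : Fin n → ℂ) (u v : ℂ) (ks : List (Fin L)) :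
    trg M s (T1l M n L hb a v ks * T0l M n L hb a u ks)
      = stlM M n L hb a s v ks * stlM M n L hb a s u ks := by
  ext f g
  simp only [trg, stlM, Matrix.of_apply]
  rw [Matrix.mul_apply]
  have hinner : ∀ x y : Fin n,
      (T1l M n L hb a v ks * T0l M n L hb a u ks)
          (Fin.cons x (Fin.cons y f)) (Fin.cons x (Fin.cons y g))
        = ∑ h : Fin L → Fin n,
            TSl M n L hb a v ks (Fin.cons y f) (Fin.cons y h)
              * TSl M n L hb a u ks (Fin.cons x h) (Fin.cons x g) := by
    intro x y
    rw [Matrix.mul_apply]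
    calc ∑ H, T1l M n L hb a v ks (Fin.cons x (Fin.cons y f)) H
            * T0l M n L hb a u ks H (Fin.cons x (Fin.cons y g))
        = ∑ c : Fin n, ∑ H' : Fin (L+1) → Fin n,
            T1l M n L hb a v ks (Fin.cons x (Fin.cons y f)) (Fin.cons c H')
            * T0l M n L hb a u ks (Fin.cons c H') (Fin.cons x (Fin.cons y g)) := sum_cons _
      _ = ∑ c : Fin n, ∑ d : Fin n, ∑ h : Fin L → Fin n,
            T1l M n L hb a v ks (Fin.cons x (Fin.cons y f)) (Fin.cons c (Fin.cons d h))
            * T0l M n L hb a u ks (Fin.cons c (Fin.cons d h))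
                (Fin.cons x (Fin.cons y g)) :=
          Finset.sum_congr rfl fun c _ => sum_cons _
      _ = ∑ c : Fin n, ∑ d : Fin n, ∑ h : Fin L → Fin n,
            ((if x = c then (1:ℂ) else 0)
              * TSl M n L hb a v ks (Fin.cons y f) (Fin.cons d h))
            * ((if d = y then (1:ℂ) else 0) * (-1:ℂ)^((gr M c + gr M x) * gr M y)
              * TSl M n L hb a u ks (Fin.cons c h) (Fin.cons x g)) := by
          refine Finset.sum_congr rfl fun c _ => Finset.sum_congr rfl fun d _ =>
            Finset.sum_congr rfl fun h _ => ?_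
          rw [claim1 hb a v ks x c d h y f, claim0 hb a u ks d y x g c h]
      _ = ∑ h : Fin L → Fin n,
            TSl M n L hb a v ks (Fin.cons y f) (Fin.cons y h)
              * TSl M n L hb a u ks (Fin.cons x h) (Fin.cons x g) := by
          rw [Finset.sum_eq_single x
            (fun c _ hc => Finset.sum_eq_zero fun d _ => Finset.sum_eq_zero fun h _ => by
              rw [if_neg (fun hxc => hc hxc.symm)]; ring)
            (fun hx => absurd (Finset.mem_univ x) hx)]
          rw [Finset.sum_eq_single y
            (fun d _ hd => Finset.sum_eq_zero fun h _ => by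
              rw [if_neg hd]; ring)
            (fun hy => absurd (Finset.mem_univ y) hy)]
          refine Finset.sum_congr rfl fun h _ => ?_
          rw [if_pos rfl, if_pos rfl, sgn_double]
          ring
  calc ∑ p : Fin n × Fin n, s p.1 * s p.2
          * (T1l M n L hb a v ks * T0l M n L hb a u ks)
            (Fin.cons p.1 (Fin.cons p.2 f)) (Fin.cons p.1 (Fin.cons p.2 g))
      = ∑ x : Fin n, ∑ y : Fin n, ∑ h : Fin L → Fin n,
          (s y * TSl M n L hb a v ks (Fin.cons y f) (Fin.cons y h))
          * (s x * TSl M n L hb a u ks (Fin.cons x h) (Fin.cons x g)) := by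
        rw [Fintype.sum_prod_type]
        refine Finset.sum_congr rfl fun x _ => Finset.sum_congr rfl fun y _ => ?_
        rw [hinner x y, Finset.mul_sum]
        exact Finset.sum_congr rfl fun h _ => by ring
    _ = ∑ x : Fin n, ∑ h : Fin L → Fin n, ∑ y : Fin n,
          (s y * TSl M n L hb a v ks (Fin.cons y f) (Fin.cons y h))
          * (s x * TSl M n L hb a u ks (Fin.cons x h) (Fin.cons x g)) :=
        Finset.sum_congr rfl fun x _ => Finset.sum_comm
    _ = ∑ h : Fin L → Fin n, ∑ x : Fin n, ∑ y : Fin n,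
          (s y * TSl M n L hb a v ks (Fin.cons y f) (Fin.cons y h))
          * (s x * TSl M n L hb a u ks (Fin.cons x h) (Fin.cons x g)) :=
        Finset.sum_comm
    _ = ∑ h : Fin L → Fin n,
          (∑ y : Fin n, s y * TSl M n L hb a v ks (Fin.cons y f) (Fin.cons y h))
          * (∑ x : Fin n, s x * TSl M n L hb a u ks (Fin.cons x h) (Fin.cons x g)) := by
        refine Finset.sum_congr rfl fun h _ => ?_
        rw [Finset.sum_mul_sum]
        rw [Finset.sum_comm]

lemma stlM_comm_generic (hb : ℂ) (a : Fin L → ℂ) (s : Fin n → ℂ) (u v : ℂ)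
    (hgood : (u - v) * (u - v) - hb * hb ≠ 0) :
    stlM M n L hb a s u (List.finRange L) * stlM M n L hb a s v (List.finRange L)
      = stlM M n L hb a s v (List.finRange L) * stlM M n L hb a s u (List.finRange L) := by
  have hpw : (List.finRange L).Pairwise (· ≠ ·) := List.nodup_finRange L
  set w := u - v with hw
  set cc := w * w - hb * hb with hcc
  set Bq := Rm M n hb w with hBq
  set Bq' := cc⁻¹ • (w • (1:E2 n) + hb • Pm M n) with hBq'
  have hBB' : Bq * Bq' = 1 := by
    rw [hBq, hBq', mul_smul_comm, Rm_inv_right, smul_smul, ← hcc,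
      inv_mul_cancel₀ hgood, one_smul]
  have hB'B : Bq' * Bq = 1 := by
    rw [hBq, hBq', smul_mul_assoc, Rm_inv_left, smul_smul, ← hcc,
      inv_mul_cancel₀ hgood, one_smul]
  have hRR' : kEmb M n (L+2) 0 1 Bq * kEmb M n (L+2) 0 1 Bq' = 1 := by
    rw [mul01, hBB', kEmb_one fin_zero_ne_one]
  have hrtt := RTT (M := M) (n := n) hb a u v (List.finRange L) hpw
  have hbalB' : ∀ p q : Fin n × Fin n,
      s p.1 * s p.2 * Bq' p q = s q.1 * s q.2 * Bq' p q := by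
    intro p q
    rw [hBq']
    simp only [Matrix.smul_apply, smul_eq_mul]
    calc s p.1 * s p.2 * (cc⁻¹ * (w • (1:E2 n) + hb • Pm M n) p q)
        = cc⁻¹ * (s p.1 * s p.2 * (w • (1:E2 n) + hb • Pm M n) p q) := by ring
      _ = cc⁻¹ * (s q.1 * s q.2 * (w • (1:E2 n) + hb • Pm M n) p q) := by
          rw [bal s w hb p q]
      _ = _ := by ring
  have h1 : T0l M n L hb a u (List.finRange L) * T1l M n L hb a v (List.finRange L)
      = kEmb M n (L+2) 0 1 Bq'
        * (T1l M n L hb a v (List.finRange L) * T0l M n L hb a u (List.finRange L)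
            * kEmb M n (L+2) 0 1 Bq) := by
    have h2 : kEmb M n (L+2) 0 1 Bq' * kEmb M n (L+2) 0 1 Bq = 1 := by
      rw [mul01, hB'B, kEmb_one fin_zero_ne_one]
    calc T0l M n L hb a u (List.finRange L) * T1l M n L hb a v (List.finRange L)
        = 1 * (T0l M n L hb a u (List.finRange L) * T1l M n L hb a v (List.finRange L)) :=
          (one_mul _).symm
      _ = (kEmb M n (L+2) 0 1 Bq' * kEmb M n (L+2) 0 1 Bq)
            * (T0l M n L hb a u (List.finRange L) * T1l M n L hb a v (List.finRange L)) := by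
          rw [h2]
      _ = kEmb M n (L+2) 0 1 Bq'
            * (kEmb M n (L+2) 0 1 Bq * T0l M n L hb a u (List.finRange L)
              * T1l M n L hb a v (List.finRange L)) := by
          rw [mul_assoc, ← mul_assoc (kEmb M n (L+2) 0 1 Bq)]
      _ = _ := by rw [hrtt]
  calc stlM M n L hb a s u (List.finRange L) * stlM M n L hb a s v (List.finRange L)
      = trg M s (T0l M n L hb a u (List.finRange L) * T1l M n L hb a v (List.finRange L)) :=
        (trg_T0T1 hb a s u v _).symm
    _ = trg M s (kEmb M n (L+2) 0 1 Bq'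
          * (T1l M n L hb a v (List.finRange L) * T0l M n L hb a u (List.finRange L)
            * kEmb M n (L+2) 0 1 Bq)) := by rw [h1]
    _ = trg M s ((T1l M n L hb a v (List.finRange L) * T0l M n L hb a u (List.finRange L)
          * kEmb M n (L+2) 0 1 Bq) * kEmb M n (L+2) 0 1 Bq') :=
        trg_cyc s Bq' hbalB' _
    _ = trg M s (T1l M n L hb a v (List.finRange L) * T0l M n L hb a u (List.finRange L)
          * (kEmb M n (L+2) 0 1 Bq * kEmb M n (L+2) 0 1 Bq')) := by rw [mul_assoc]
    _ = trg M s (T1l M n L hb a v (List.finRange L) * T0l M n L hb a u (List.finRange L)) := by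
        rw [hRR', mul_one]
    _ = _ := trg_T1T0 hb a s u v _

end S7
namespace S7

open Matrix Finset Equiv

variable {M n m L : ℕ}

def PolyF (F : ℂ → ℂ) : Prop := ∃ p : Polynomial ℂ, ∀ x, F x = p.eval x

lemma PolyF.const (c : ℂ) : PolyF (fun _ => c) := ⟨Polynomial.C c, by simp⟩

lemma PolyF.congr {F G : ℂ → ℂ} (h : ∀ x, F x = G x) (hG : PolyF G) : PolyF F := by
  obtain ⟨p, hp⟩ := hG
  exact ⟨p, fun x => (h x).trans (hp x)⟩

lemma PolyF.mul {F G : ℂ → ℂ} (hF : PolyF F) (hG : PolyF G) :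
    PolyF (fun x => F x * G x) := by
  obtain ⟨p, hp⟩ := hF
  obtain ⟨q, hq⟩ := hG
  exact ⟨p * q, fun x => by
    show F x * G x = _
    rw [Polynomial.eval_mul, hp x, hq x]⟩

lemma PolyF.add {F G : ℂ → ℂ} (hF : PolyF F) (hG : PolyF G) :
    PolyF (fun x => F x + G x) := by
  obtain ⟨p, hp⟩ := hF
  obtain ⟨q, hq⟩ := hG
  exact ⟨p + q, fun x => by
    show F x + G x = _
    rw [Polynomial.eval_add, hp x, hq x]⟩

lemma PolyF.sub {F G : ℂ → ℂ} (hF : PolyF F) (hG : PolyF G) :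
    PolyF (fun x => F x - G x) := by
  obtain ⟨p, hp⟩ := hF
  obtain ⟨q, hq⟩ := hG
  exact ⟨p - q, fun x => by
    show F x - G x = _
    rw [Polynomial.eval_sub, hp x, hq x]⟩

lemma PolyF.sum {ι : Type*} [DecidableEq ι] (t : Finset ι) (F : ι → ℂ → ℂ)
    (h : ∀ i ∈ t, PolyF (F i)) : PolyF (fun x => ∑ i ∈ t, F i x) := by
  induction t using Finset.induction with
  | empty => exact PolyF.congr (fun x => by simp) (PolyF.const 0)
  | @insert i t hni ih =>
    refine PolyF.congr (fun x => Finset.sum_insert hni) ?_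
    exact PolyF.add (h i (Finset.mem_insert_self i t))
      (ih fun j hj => h j (Finset.mem_insert_of_mem hj))

lemma polyf_Rm (hb c : ℂ) (p q : Fin n × Fin n) :
    PolyF (fun v => Rm M n hb (v - c) p q) := by
  refine ⟨Polynomial.C ((1:E2 n) p q) * (Polynomial.X - Polynomial.C c)
    - Polynomial.C (hb * Pm M n p q), fun v => ?_⟩
  simp only [Rm, Matrix.sub_apply, Matrix.smul_apply, smul_eq_mul, Polynomial.eval_sub,
    Polynomial.eval_mul, Polynomial.eval_C, Polynomial.eval_X]
  ring

lemma polyf_TSl (hb : ℂ) (a : Fin L → ℂ) (ks : List (Fin L)) (G : Fin (L+1) → Fin n) :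
    ∀ F : Fin (L+1) → Fin n, PolyF (fun v => TSl M n L hb a v ks F G) := by
  induction ks with
  | nil =>
    intro F
    exact PolyF.congr (fun v => by simp [TSl]) (PolyF.const ((1 : Ten n (L+1)) F G))
  | cons k ks ih =>
    intro F
    have hsplit : ∀ v, TSl M n L hb a v (k :: ks) F G
        = ∑ H, kEmb M n (L+1) 0 k.succ (Rm M n hb (v - a k)) F H
            * TSl M n L hb a v ks H G := by
      intro v
      rw [show TSl M n L hb a v (k :: ks)
          = kEmb M n (L+1) 0 k.succ (Rm M n hb (v - a k)) * TSl M n L hb a v ks from by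
        simp [TSl]]
      rw [Matrix.mul_apply]
    refine PolyF.congr hsplit (PolyF.sum _ _ fun H _ => PolyF.mul ?_ (ih H))
    refine PolyF.congr (fun v => kEmb_apply 0 k.succ (Rm M n hb (v - a k)) F H) ?_
    exact PolyF.mul (PolyF.mul (PolyF.const _) (polyf_Rm hb (a k) _ _)) (PolyF.const _)

lemma polyf_stlM (hb : ℂ) (a : Fin L → ℂ) (s : Fin n → ℂ) (ks : List (Fin L))
    (f g : Fin L → Fin n) : PolyF (fun v => stlM M n L hb a s v ks f g) := by
  refine PolyF.congr
    (G := fun v => ∑ x : Fin n,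
      s x * TSl M n L hb a v ks (Fin.cons x f) (Fin.cons x g))
    (fun v => rfl) (PolyF.sum Finset.univ _ fun x _ => ?_)
  exact PolyF.mul (PolyF.const (s x)) (polyf_TSl hb a ks _ _)

lemma polyf_zero {F : ℂ → ℂ} (hF : PolyF F) (S : Set ℂ) (hS : S.Finite)
    (h0 : ∀ x ∉ S, F x = 0) : ∀ x, F x = 0 := by
  obtain ⟨p, hp⟩ := hF
  by_cases hpz : p = 0
  · intro x; rw [hp x, hpz, Polynomial.eval_zero]
  · exfalso
    have hroots : {x | p.IsRoot x}.Finite := Polynomial.finite_setOf_isRoot hpz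
    have hsub : (Set.univ : Set ℂ) ⊆ S ∪ {x | p.IsRoot x} := by
      intro x _
      by_cases hx : x ∈ S
      · exact Or.inl hx
      · exact Or.inr (by
          show p.IsRoot x
          rw [Polynomial.IsRoot, ← hp x]
          exact h0 x hx)
    exact Set.infinite_univ (Set.Finite.subset (hS.union hroots) hsub)

lemma stlM_comm_all (hb : ℂ) (a : Fin L → ℂ) (s : Fin n → ℂ) (u v : ℂ) :
    stlM M n L hb a s u (List.finRange L) * stlM M n L hb a s v (List.finRange L)
      = stlM M n L hb a s v (List.finRange L) * stlM M n L hb a s u (List.finRange L) := by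
  ext f g
  have hA : PolyF (fun v' => (stlM M n L hb a s u (List.finRange L)
      * stlM M n L hb a s v' (List.finRange L)) f g) := by
    have h1 : PolyF (fun v' => ∑ h : Fin L → Fin n,
        stlM M n L hb a s u (List.finRange L) f h
          * stlM M n L hb a s v' (List.finRange L) h g) :=
      PolyF.sum _ _ (fun h _ => PolyF.mul (PolyF.const _) (polyf_stlM hb a s _ _ _))
    exact PolyF.congr (fun v' => Matrix.mul_apply) h1
  have hB : PolyF (fun v' => (stlM M n L hb a s v' (List.finRange L)
      * stlM M n L hb a s u (List.finRange L)) f g) := by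
    have h1 : PolyF (fun v' => ∑ h : Fin L → Fin n,
        stlM M n L hb a s v' (List.finRange L) f h
          * stlM M n L hb a s u (List.finRange L) h g) :=
      PolyF.sum _ _ (fun h _ => PolyF.mul (polyf_stlM hb a s _ _ _) (PolyF.const _))
    exact PolyF.congr (fun v' => Matrix.mul_apply) h1
  have hF : PolyF (fun v' => (stlM M n L hb a s u (List.finRange L)
        * stlM M n L hb a s v' (List.finRange L)) f g
      - (stlM M n L hb a s v' (List.finRange L)
        * stlM M n L hb a s u (List.finRange L)) f g) := hA.sub hB
  have h0 : ∀ v' ∉ ({u - hb, u + hb} : Set ℂ),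
      (stlM M n L hb a s u (List.finRange L)
        * stlM M n L hb a s v' (List.finRange L)) f g
      - (stlM M n L hb a s v' (List.finRange L)
        * stlM M n L hb a s u (List.finRange L)) f g = 0 := by
    intro v' hv'
    simp only [Set.mem_insert_iff, Set.mem_singleton_iff, not_or] at hv'
    have hgood : (u - v') * (u - v') - hb * hb ≠ 0 := by
      intro h
      have hfac : (u - v' - hb) * (u - v' + hb) = 0 := by linear_combination h
      rcases mul_eq_zero.1 hfac with h1 | h1
      · exact hv'.1 (by linear_combination -h1)
      · exact hv'.2 (by linear_combination -h1)
    rw [stlM_comm_generic hb a s u v' hgood, sub_self]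
  have hz := polyf_zero hF _ (Set.Finite.insert _ (Set.finite_singleton _)) h0 v
  exact sub_eq_zero.1 hz

lemma Tmono_eq_TSl (hb : ℂ) (a : Fin L → ℂ) (u : ℂ) :
    Tmono M n L hb a u = TSl M n L hb a u (List.finRange L) := by
  rw [Tmono, TSl, List.ofFn_eq_map]

lemma stm_eq_stlM (hb : ℂ) (a : Fin L → ℂ) (u : ℂ) :
    stm M n L hb a u
      = stlM M n L hb a (fun i => (-1:ℂ)^(gr M i)) u (List.finRange L) := by
  ext f g
  simp only [stm, stlM, Matrix.of_apply, Matrix.sum_apply, Matrix.smul_apply, smul_eq_mul,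
    blk, Tmono_eq_TSl]

lemma tm_eq_stlM (hb : ℂ) (a : Fin L → ℂ) (u : ℂ) :
    tm M n L hb a u = stlM M n L hb a (fun _ => (1:ℂ)) u (List.finRange L) := by
  ext f g
  simp only [tm, stlM, Matrix.of_apply, Matrix.sum_apply, Matrix.smul_apply, smul_eq_mul,
    blk, Tmono_eq_TSl, one_mul]

end S7

/-- Both the supertrace and the trace transfer matrices generate
commutative families: `[st(u), st(v)] = 0` and `[t(u), t(v)] = 0`. -/
theorem statement7 (M N : ℕ) (hM : 1 ≤ M) (hN : 1 ≤ N) (hb : ℂ) (hhb : hb ≠ 0)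
    (L : ℕ) (hL : 1 ≤ L) (sh : Fin L → ℂ) :
    ∀ u v : ℂ,
      stm M (M + N) L hb sh u * stm M (M + N) L hb sh v
        = stm M (M + N) L hb sh v * stm M (M + N) L hb sh u ∧
      tm M (M + N) L hb sh u * tm M (M + N) L hb sh v
        = tm M (M + N) L hb sh v * tm M (M + N) L hb sh u := by
  intro u v
  constructor
  · simp only [S7.stm_eq_stlM]
    exact S7.stlM_comm_all hb sh _ u v
  · simp only [S7.tm_eq_stlM]
    exact S7.stlM_comm_all hb sh _ u v

end SuperSpin
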